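/- (Lemma 1, parts 3–4: per-state subsequences are urn sequences, hence exchangeable.) Assume the reinforced urn process is recurrent: μ(v_{i,n} < ∞ for all i ∈ E and all n ≥ 1) = 1, and define L_{i,n} = L_{v_{i,n}+1}, T_{i,n} = T_{v_{i,n}}. Then for each i ∈ E: the sequence (L_{i,n})_{n≥1} has the law of the generalized Pólya urn sequence with initial composition m^i (i.e. μ(L_{i,1} = j_1, …, L_{i,k} = j_k) = ∏_{j∈E} ∏_{h=0}^{k_j−1}(m^i({j})+h) / ∏_{h=0}^{k−1}(m^i(E)+h), with k_j = #{r ≤ k : j_r = j}), and the sequence (T_{i,n})_{n≥1} has the law of the beta-Stacy urn system with parameters (c^i, F0^i). In particular, for every k ≥ 1 and every permutation σ of {1,…,k}, the law of (L_{i,σ(1)},…,L_{i,σ(k)}) equals the law of (L_{i,1},…,L_{i,k}) and the law of (T_{i,σ(1)},…,T_{i,σ(k)}) equals the law of (T_{i,1},…,T_{i,k}): both sequences are exchangeable. -/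

import Mathlib

open MeasureTheory

/-! # Setup (reinforced urn process)

`E` is a nonempty countable state space with a fixed starting state `l₀`.  For each
`i ∈ E`: `m^i` is a measure on `E` with `m^i({i}) = 0` and `0 < m^i(E) < ∞` (mass
function `m i : E → ℝ≥0∞`); `c^i(s) > 0`; `F0^i` is a probability mass function on `ℕ+`
with `F0^i({s}) > 0` for all `s`, and `F0^i([s,∞)) = F0^i({s}) + F0^i((s,∞))`.

`μ` is the law on `(E × ℕ+)^ℕ` of the reinforced urn process `{(L_k, T_k)}_{k≥0}`:
`L_0 = l₀` (hypothesis `h0`); conditionally on `(L_{0:k}, T_{0:k-1})` with `L_k = i`, the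
holding time `T_k` is drawn from the beta-Stacy urn predictive of state `i` and,
independently, the next state `L_{k+1}` from the Pólya urn predictive of state `i`
(hypothesis `hstep`).

`v_{i,n}` (`visit i n`, `n` counted from `0`) is the index of the `(n+1)`-th visit of
`(L_k)` to `i`; recurrence means that a.s. every state is visited infinitely often; and
`L_{i,n} = L_{v_{i,n}+1}`, `T_{i,n} = T_{v_{i,n}}`. -/

instance : MeasurableSpace ℕ+ := ⊤

variable {E : Type*}

/-- `F0^i((s,∞))`. -/
noncomputable def survF0 (F0 : E → ℕ+ → ENNReal) (i : E) (s : ℕ+) : ENNReal :=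
  ∑' r : ℕ+, if s < r then F0 i r else 0

/-- `d^i_s = #{h < k : L_h = i, T_h = s}` along a history. -/
noncomputable def dHist [DecidableEq E] (l : ℕ → E) (tv : ℕ → ℕ+) (k : ℕ) (i : E)
    (s : ℕ+) : ℕ :=
  ((Finset.range k).filter (fun h => l h = i ∧ tv h = s)).card

/-- `w^i_s = #{h < k : L_h = i, T_h > s}` along a history. -/
noncomputable def wHist [DecidableEq E] (l : ℕ → E) (tv : ℕ → ℕ+) (k : ℕ) (i : E)
    (s : ℕ+) : ℕ :=
  ((Finset.range k).filter (fun h => l h = i ∧ s < tv h)).card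

/-- The index of the `(n+1)`-th visit of `(L_k)_{k≥0}` to state `i` (so `visit i 0` is
the first visit; junk value `sInf ∅ = 0` if fewer than `n+1` visits occur). -/
noncomputable def visit [DecidableEq E] (i : E) (n : ℕ) (ω : ℕ → E × ℕ+) : ℕ :=
  sInf {k | (ω k).1 = i ∧ ((Finset.range k).filter (fun h => (ω h).1 = i)).card = n}

/-- `L_{i,n} = L_{v_{i,n}+1}`, the state visited immediately after the `(n+1)`-th visit
to `i` is over. -/
noncomputable def visitNext [DecidableEq E] (i : E) (n : ℕ) (ω : ℕ → E × ℕ+) : E :=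
  (ω (visit i n ω + 1)).1

/-- `T_{i,n} = T_{v_{i,n}}`, the length of the `(n+1)`-th visit to `i`. -/
noncomputable def visitHold [DecidableEq E] (i : E) (n : ℕ) (ω : ℕ → E × ℕ+) : ℕ+ :=
  (ω (visit i n ω)).2

/-- The ascending factorial `x^{(k)} = x (x+1) ⋯ (x+k-1)`. -/
noncomputable def ascFac (x : ENNReal) (k : ℕ) : ENNReal :=
  ∏ h ∈ Finset.range k, (x + h)

section Aux
open Finset

variable {E : Type*} [DecidableEq E]

/-- number of visits of `l` to `i` strictly before time `k`. -/
def cntv (l : ℕ → E) (i : E) (k : ℕ) : ℕ :=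
  ((Finset.range k).filter (fun h => l h = i)).card

lemma cntv_succ (l : ℕ → E) (i : E) (k : ℕ) :
    cntv l i (k + 1) = cntv l i k + if l k = i then 1 else 0 := by
  unfold cntv
  rw [Finset.range_add_one, Finset.filter_insert]
  split <;> simp [Finset.card_insert_of_notMem]

lemma cntv_mono (l : ℕ → E) (i : E) : Monotone (cntv l i) := by
  intro a b hab
  exact Finset.card_le_card (Finset.filter_subset_filter _ (by
    intro x hx; simp only [Finset.mem_range] at *; omega))

lemma cntv_lt_of_visit {l : ℕ → E} {i : E} {h K : ℕ} (hh : h < K) (hi : l h = i) :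
    cntv l i h < cntv l i K := by
  have h1 : cntv l i h + 1 = cntv l i (h + 1) := by rw [cntv_succ, if_pos hi]
  have := cntv_mono l i (show h + 1 ≤ K from hh)
  omega

lemma exists_visit_of_lt_cntv {l : ℕ → E} {i : E} {K r : ℕ} (hr : r < cntv l i K) :
    ∃ h < K, l h = i ∧ cntv l i h = r := by
  induction K with
  | zero => simp [cntv] at hr
  | succ K ih =>
    rw [cntv_succ] at hr
    by_cases h1 : r < cntv l i K
    · obtain ⟨h, hh, hi, hc⟩ := ih h1
      exact ⟨h, by omega, hi, hc⟩
    · have hli : l K = i := by by_contra hne; rw [if_neg hne] at hr; omega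
      rw [if_pos hli] at hr
      exact ⟨K, by omega, hli, by omega⟩

lemma cntv_injOn_visits {l : ℕ → E} {i : E} {h₁ h₂ : ℕ}
    (hi₁ : l h₁ = i) (hi₂ : l h₂ = i) (hc : cntv l i h₁ = cntv l i h₂) : h₁ = h₂ := by
  rcases lt_trichotomy h₁ h₂ with h | h | h
  · exact absurd hc (Nat.ne_of_lt (cntv_lt_of_visit h hi₁))
  · exact h
  · exact absurd hc.symm (Nat.ne_of_lt (cntv_lt_of_visit h hi₂))

lemma cntv_congr {l l' : ℕ → E} {i : E} {k : ℕ} (h : ∀ h' < k, l h' = l' h') :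
    cntv l i k = cntv l' i k := by
  unfold cntv
  congr 1
  apply Finset.filter_congr
  intro x hx
  simp only [Finset.mem_range] at hx
  rw [h x hx]

/-- The master bijection: visits to `i` before `K` correspond to `0, …, n-1`. -/
lemma card_filter_visits {l : ℕ → E} {i : E} {K n : ℕ} (hK : cntv l i K = n)
    (Q R : ℕ → Prop) [DecidablePred Q] [DecidablePred R]
    (hQR : ∀ h < K, l h = i → (Q h ↔ R (cntv l i h))) :
    ((Finset.range K).filter (fun h => l h = i ∧ Q h)).card
      = ((Finset.range n).filter R).card := by
  apply Finset.card_bij (fun h _ => cntv l i h)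
  · intro a ha
    simp only [Finset.mem_filter, Finset.mem_range] at ha ⊢
    obtain ⟨haK, hai, haQ⟩ := ha
    exact ⟨hK ▸ cntv_lt_of_visit haK hai, (hQR a haK hai).1 haQ⟩
  · intro a₁ ha₁ a₂ ha₂ hc
    simp only [Finset.mem_filter, Finset.mem_range] at ha₁ ha₂
    exact cntv_injOn_visits ha₁.2.1 ha₂.2.1 hc
  · intro r hr
    simp only [Finset.mem_filter, Finset.mem_range] at hr
    obtain ⟨h, hhK, hi, hc⟩ := exists_visit_of_lt_cntv (K := K) (hK ▸ hr.1)
    refine ⟨h, ?_, hc⟩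
    simp only [Finset.mem_filter, Finset.mem_range]
    exact ⟨hhK, hi, (hQR h hhK hi).2 (hc ▸ hr.2)⟩

lemma visit_eq_of {i : E} {n k : ℕ} {ω : ℕ → E × ℕ+} (hk : (ω k).1 = i)
    (hc : cntv (fun h => (ω h).1) i k = n) : visit i n ω = k := by
  have hset : {k' | (ω k').1 = i ∧
      ((Finset.range k').filter (fun h => (ω h).1 = i)).card = n} = {k} := by
    ext k'
    simp only [Set.mem_setOf_eq, Set.mem_singleton_iff]
    constructor
    · rintro ⟨h1, h2⟩
      exact cntv_injOn_visits (l := fun h => (ω h).1) h1 hk (by rw [show cntv (fun h => (ω h).1) i k' = ((Finset.range k').filter (fun h => (ω h).1 = i)).card from rfl, h2, hc.symm])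
    · rintro rfl; exact ⟨hk, hc⟩
  rw [visit, hset, csInf_singleton]

lemma cntv_count {i : E} (ω : ℕ → E × ℕ+) (k : ℕ) :
    cntv (fun h => (ω h).1) i k = Nat.count (fun h => (ω h).1 = i) k := by
  rw [Nat.count_eq_card_filter_range]
  rfl

lemma visit_exists {i : E} {ω : ℕ → E × ℕ+} (hω : {k | (ω k).1 = i}.Infinite) (n : ℕ) :
    ∃ k, (ω k).1 = i ∧ cntv (fun h => (ω h).1) i k = n := by
  refine ⟨Nat.nth (fun h => (ω h).1 = i) n, Nat.nth_mem_of_infinite hω n, ?_⟩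
  rw [cntv_count]
  exact Nat.count_nth (fun hf => absurd hf hω)

lemma visit_spec {i : E} {ω : ℕ → E × ℕ+} (hω : {k | (ω k).1 = i}.Infinite) (n : ℕ) :
    (ω (visit i n ω)).1 = i ∧ cntv (fun h => (ω h).1) i (visit i n ω) = n := by
  obtain ⟨k, h1, h2⟩ := visit_exists hω n
  rw [visit_eq_of h1 h2]
  exact ⟨h1, h2⟩


/-- The prefix of states (and reward of next states) realizing
`visitNext i r = jvE r` for `r < n`, with `K` the `(n+1)`-th visit. -/
def good1 (i : E) (n : ℕ) (jvE : ℕ → E) (K : ℕ) (l : ℕ → E) : Prop :=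
  l K = i ∧ cntv l i K = n ∧ ∀ h < K, l h = i → l (h + 1) = jvE (cntv l i h)

def good2 (i : E) (n : ℕ) (τE : ℕ → ℕ+) (K : ℕ) (l : ℕ → E) (tv : ℕ → ℕ+) : Prop :=
  l K = i ∧ cntv l i K = n ∧ ∀ h < K, l h = i → tv h = τE (cntv l i h)

lemma good1_congr {i : E} {n : ℕ} {jvE : ℕ → E} {K : ℕ} {l l' : ℕ → E}
    (hll : ∀ h ≤ K, l h = l' h) : good1 i n jvE K l ↔ good1 i n jvE K l' := by
  have hc : ∀ h ≤ K, cntv l i h = cntv l' i h := fun h hh =>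
    cntv_congr (fun h' hh' => hll h' (by omega))
  unfold good1
  rw [hll K le_rfl, hc K le_rfl]
  refine and_congr_right fun _ => and_congr_right fun _ => ?_
  refine forall_congr' fun h => forall_congr' fun hh => ?_
  rw [hll h (by omega), hc h (by omega), hll (h+1) (by omega)]

lemma good2_congr {i : E} {n : ℕ} {τE : ℕ → ℕ+} {K : ℕ} {l l' : ℕ → E}
    {tv tv' : ℕ → ℕ+} (hll : ∀ h ≤ K, l h = l' h) (htt : ∀ h < K, tv h = tv' h) :
    good2 i n τE K l tv ↔ good2 i n τE K l' tv' := by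
  have hc : ∀ h ≤ K, cntv l i h = cntv l' i h := fun h hh =>
    cntv_congr (fun h' hh' => hll h' (by omega))
  unfold good2
  rw [hll K le_rfl, hc K le_rfl]
  refine and_congr_right fun _ => and_congr_right fun _ => ?_
  refine forall_congr' fun h => forall_congr' fun hh => ?_
  rw [hll h (by omega), hc h (by omega), htt h hh]

lemma visit_lt_of_good {i : E} {n K : ℕ} {ω : ℕ → E × ℕ+}
    (hω : {k | (ω k).1 = i}.Infinite)
    (hK : (ω K).1 = i) (hn : cntv (fun h => (ω h).1) i K = n) {r : ℕ} (hr : r < n) :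
    visit i r ω < K ∧ (ω (visit i r ω)).1 = i ∧
      cntv (fun h => (ω h).1) i (visit i r ω) = r := by
  obtain ⟨h1, h2⟩ := visit_spec hω r
  refine ⟨?_, h1, h2⟩
  by_contra hge
  have := cntv_mono (fun h => (ω h).1) i (show K ≤ visit i r ω by omega)
  omega

lemma mem_A_of_good1 {i : E} {n K : ℕ} {jvE : ℕ → E} {ω : ℕ → E × ℕ+}
    (hω : {k | (ω k).1 = i}.Infinite) (hg : good1 i n jvE K (fun h => (ω h).1)) :
    (∀ r < n, visitNext i r ω = jvE r) ∧ visit i n ω = K := by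
  obtain ⟨hK, hn, hnext⟩ := hg
  refine ⟨fun r hr => ?_, visit_eq_of hK hn⟩
  obtain ⟨hlt, h1, h2⟩ := visit_lt_of_good hω hK hn hr
  have := hnext (visit i r ω) hlt h1
  simp only at this
  rw [visitNext, this, h2]

lemma good1_of_mem_A {i : E} {n : ℕ} {jvE : ℕ → E} {ω : ℕ → E × ℕ+}
    (hω : {k | (ω k).1 = i}.Infinite) (hA : ∀ r < n, visitNext i r ω = jvE r) :
    good1 i n jvE (visit i n ω) (fun h => (ω h).1) := by
  obtain ⟨h1, h2⟩ := visit_spec hω n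
  refine ⟨h1, h2, fun h hh hi => ?_⟩
  set r := cntv (fun h' => (ω h').1) i h with hr
  have hrn : r < n := by
    have hs := cntv_succ (fun h' => (ω h').1) i h
    rw [if_pos hi] at hs
    have := cntv_mono (fun h' => (ω h').1) i (show h + 1 ≤ visit i n ω by omega)
    omega
  have hveq : visit i r ω = h := visit_eq_of hi hr.symm
  have := hA r hrn
  rw [visitNext, hveq] at this
  exact this

lemma mem_B_of_good2 {i : E} {n K : ℕ} {τE : ℕ → ℕ+} {ω : ℕ → E × ℕ+}
    (hω : {k | (ω k).1 = i}.Infinite)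
    (hg : good2 i n τE K (fun h => (ω h).1) (fun h => (ω h).2)) :
    (∀ r < n, visitHold i r ω = τE r) ∧ visit i n ω = K := by
  obtain ⟨hK, hn, hhold⟩ := hg
  refine ⟨fun r hr => ?_, visit_eq_of hK hn⟩
  obtain ⟨hlt, h1, h2⟩ := visit_lt_of_good hω hK hn hr
  have := hhold (visit i r ω) hlt h1
  simp only at this
  rw [visitHold, this, h2]

lemma good2_of_mem_B {i : E} {n : ℕ} {τE : ℕ → ℕ+} {ω : ℕ → E × ℕ+}
    (hω : {k | (ω k).1 = i}.Infinite) (hB : ∀ r < n, visitHold i r ω = τE r) :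
    good2 i n τE (visit i n ω) (fun h => (ω h).1) (fun h => (ω h).2) := by
  obtain ⟨h1, h2⟩ := visit_spec hω n
  refine ⟨h1, h2, fun h hh hi => ?_⟩
  set r := cntv (fun h' => (ω h').1) i h with hr
  have hrn : r < n := by
    have hs := cntv_succ (fun h' => (ω h').1) i h
    rw [if_pos hi] at hs
    have := cntv_mono (fun h' => (ω h').1) i (show h + 1 ≤ visit i n ω by omega)
    omega
  have hveq : visit i r ω = h := visit_eq_of hi hr.symm
  have := hB r hrn
  rw [visitHold, hveq] at this
  exact this

end Aux


section MeasAux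

open MeasureTheory

variable {E : Type*} [DecidableEq E] [Countable E] [MeasurableSpace E]
  [MeasurableSingletonClass E]

/-- cylinder pinning the states up to time `K`. -/
def cylL (K : ℕ) (l : ℕ → E) : Set (ℕ → E × ℕ+) := {ω | ∀ h ≤ K, (ω h).1 = l h}

/-- cylinder pinning the states up to time `K` and holding times before `K`. -/
def cylLT (K : ℕ) (l : ℕ → E) (tv : ℕ → ℕ+) : Set (ℕ → E × ℕ+) :=
  {ω | (∀ h ≤ K, (ω h).1 = l h) ∧ ∀ h < K, (ω h).2 = tv h}

/-- the recurrence event. -/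
def RecSet (E : Type*) : Set (ℕ → E × ℕ+) := {ω | ∀ i : E, {k | (ω k).1 = i}.Infinite}

lemma measSet_fst (h : ℕ) (a : E) : MeasurableSet {ω : ℕ → E × ℕ+ | (ω h).1 = a} :=
  (measurable_pi_apply h).fst (measurableSet_singleton a)

lemma measSet_snd (h : ℕ) (s : Set ℕ+) :
    MeasurableSet {ω : ℕ → E × ℕ+ | (ω h).2 ∈ s} :=
  (measurable_pi_apply h).snd (MeasurableSpace.measurableSet_top)

lemma measSet_cylL (K : ℕ) (l : ℕ → E) : MeasurableSet (cylL K l) := by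
  have : cylL K l = ⋂ (h : ℕ) (_ : h ≤ K), {ω : ℕ → E × ℕ+ | (ω h).1 = l h} := by
    ext ω; simp [cylL]
  rw [this]
  exact MeasurableSet.iInter fun h => MeasurableSet.iInter fun _ => measSet_fst h (l h)

lemma measSet_cylLT (K : ℕ) (l : ℕ → E) (tv : ℕ → ℕ+) :
    MeasurableSet (cylLT K l tv) := by
  have : cylLT K l tv = cylL K l ∩
      ⋂ (h : ℕ) (_ : h < K), {ω : ℕ → E × ℕ+ | (ω h).2 ∈ ({tv h} : Set ℕ+)} := by
    ext ω; simp [cylLT, cylL]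
  rw [this]
  exact (measSet_cylL K l).inter
    (MeasurableSet.iInter fun h => MeasurableSet.iInter fun _ => measSet_snd h _)

lemma measSet_rec : MeasurableSet (RecSet E) := by
  have : RecSet E = ⋂ (i : E) (N : ℕ), ⋃ (k : ℕ) (_ : N ≤ k),
      {ω : ℕ → E × ℕ+ | (ω k).1 = i} := by
    ext ω
    simp only [RecSet, Set.mem_setOf_eq, Set.mem_iInter, Set.mem_iUnion]
    refine forall_congr' fun i => ?_
    rw [← Nat.frequently_atTop_iff_infinite, Filter.frequently_atTop]
    exact forall_congr' fun N => exists_congr fun k => by tauto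
  rw [this]
  exact MeasurableSet.iInter fun i => MeasurableSet.iInter fun N =>
    MeasurableSet.iUnion fun k => MeasurableSet.iUnion fun _ => measSet_fst k i

lemma measure_eq_inter_rec (μ : Measure (ℕ → E × ℕ+)) [IsProbabilityMeasure μ]
    (hrec : μ (RecSet E) = 1) (S : Set (ℕ → E × ℕ+)) : μ S = μ (S ∩ RecSet E) := by
  have hc : μ (RecSet E)ᶜ = 0 := by
    rw [measure_compl measSet_rec (measure_ne_top μ _), hrec, measure_univ, tsub_self]
  refine le_antisymm ?_ (measure_mono Set.inter_subset_left)
  calc μ S ≤ μ (S ∩ RecSet E) + μ (S \ RecSet E) := measure_le_inter_add_diff μ S _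
    _ ≤ μ (S ∩ RecSet E) + μ (RecSet E)ᶜ := by
        gcongr; exact fun x hx => hx.2
    _ = μ (S ∩ RecSet E) := by rw [hc, add_zero]

/-- index type for state-cylinders. -/
abbrev PathIdx (E : Type*) := (K : ℕ) × (Fin (K + 1) → E)

/-- index type for state-and-time cylinders. -/
abbrev PathIdx2 (E : Type*) := (K : ℕ) × (Fin (K + 1) → E) × (Fin K → ℕ+)

/-- extension of a finite state path to `ℕ → E`. -/
def extE (x : PathIdx E) : ℕ → E :=
  fun h => if hh : h ≤ x.1 then x.2 ⟨h, Nat.lt_succ_of_le hh⟩ else x.2 0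

def extE2 (x : PathIdx2 E) : ℕ → E :=
  fun h => if hh : h ≤ x.1 then x.2.1 ⟨h, Nat.lt_succ_of_le hh⟩ else x.2.1 0

def extT2 (x : PathIdx2 E) : ℕ → ℕ+ :=
  fun h => if hh : h < x.1 then x.2.2 ⟨h, hh⟩ else 1

lemma extE_le {x : PathIdx E} {h : ℕ} (hh : h ≤ x.1) :
    extE x h = x.2 ⟨h, Nat.lt_succ_of_le hh⟩ := dif_pos hh

lemma extE2_le {x : PathIdx2 E} {h : ℕ} (hh : h ≤ x.1) :
    extE2 x h = x.2.1 ⟨h, Nat.lt_succ_of_le hh⟩ := dif_pos hh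

lemma extT2_lt {x : PathIdx2 E} {h : ℕ} (hh : h < x.1) :
    extT2 x h = x.2.2 ⟨h, hh⟩ := dif_pos hh

/-- two good state-cylinders of different lengths cannot both contain `ω`:
counting visits gives a contradiction. -/
lemma good_cyl_length_eq {i : E} {n Kx Ky : ℕ} {lx ly : ℕ → E} {ω : ℕ → E × ℕ+}
    (hgx1 : lx Kx = i) (hgx2 : cntv lx i Kx = n)
    (hgy1 : ly Ky = i) (hgy2 : cntv ly i Ky = n)
    (hωx : ω ∈ cylL Kx lx) (hωy : ω ∈ cylL Ky ly) : Kx = Ky := by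
  rcases lt_trichotomy Kx Ky with hlt | heq | hlt
  · exfalso
    have hagree : ∀ h < Kx + 1, lx h = ly h := fun h hh => by
      rw [← hωx h (by omega), ← hωy h (by omega)]
    have h1 : cntv ly i (Kx + 1) = cntv lx i (Kx + 1) := (cntv_congr (fun h hh => (hagree h hh).symm))
    have h2 : cntv lx i (Kx + 1) = n + 1 := by rw [cntv_succ, hgx2, if_pos hgx1]
    have h3 := cntv_mono ly i (show Kx + 1 ≤ Ky by omega)
    omega
  · exact heq
  · exfalso
    have hagree : ∀ h < Ky + 1, ly h = lx h := fun h hh => by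
      rw [← hωx h (by omega), ← hωy h (by omega)]
    have h1 : cntv lx i (Ky + 1) = cntv ly i (Ky + 1) := (cntv_congr (fun h hh => (hagree h hh).symm))
    have h2 : cntv ly i (Ky + 1) = n + 1 := by rw [cntv_succ, hgy2, if_pos hgy1]
    have h3 := cntv_mono lx i (show Ky + 1 ≤ Kx by omega)
    omega

lemma good1_cyl_disjoint {i : E} {n : ℕ} {jvE : ℕ → E} {x y : PathIdx E}
    (hx : good1 i n jvE x.1 (extE x)) (hy : good1 i n jvE y.1 (extE y))
    (hne : x ≠ y) : Disjoint (cylL x.1 (extE x)) (cylL y.1 (extE y)) := by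
  rw [Set.disjoint_left]
  intro ω hωx hωy
  apply hne
  obtain ⟨Kx, fx⟩ := x
  obtain ⟨Ky, fy⟩ := y
  have hK : Kx = Ky := good_cyl_length_eq hx.1 hx.2.1 hy.1 hy.2.1 hωx hωy
  subst hK
  congr 1
  funext h
  have h1 := hωx h.1 (Nat.lt_succ_iff.mp h.2)
  have h2 := hωy h.1 (Nat.lt_succ_iff.mp h.2)
  rw [extE_le (x := ⟨Kx, fx⟩) (Nat.lt_succ_iff.mp h.2)] at h1
  rw [extE_le (x := ⟨Kx, fy⟩) (Nat.lt_succ_iff.mp h.2)] at h2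
  exact h1.symm.trans h2

lemma good2_cyl_disjoint {i : E} {n : ℕ} {τE : ℕ → ℕ+} {x y : PathIdx2 E}
    (hx : good2 i n τE x.1 (extE2 x) (extT2 x)) (hy : good2 i n τE y.1 (extE2 y) (extT2 y))
    (hne : x ≠ y) :
    Disjoint (cylLT x.1 (extE2 x) (extT2 x)) (cylLT y.1 (extE2 y) (extT2 y)) := by
  rw [Set.disjoint_left]
  intro ω hωx hωy
  apply hne
  obtain ⟨Kx, fx, gx⟩ := x
  obtain ⟨Ky, fy, gy⟩ := y
  have hK : Kx = Ky := good_cyl_length_eq hx.1 hx.2.1 hy.1 hy.2.1 hωx.1 hωy.1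
  subst hK
  congr 1
  refine Prod.ext ?_ ?_
  · funext h
    have h1 := hωx.1 h.1 (Nat.lt_succ_iff.mp h.2)
    have h2 := hωy.1 h.1 (Nat.lt_succ_iff.mp h.2)
    rw [extE2_le (x := ⟨Kx, fx, gx⟩) (Nat.lt_succ_iff.mp h.2)] at h1
    rw [extE2_le (x := ⟨Kx, fy, gy⟩) (Nat.lt_succ_iff.mp h.2)] at h2
    exact h1.symm.trans h2
  · funext h
    have h1 := hωx.2 h.1 h.2
    have h2 := hωy.2 h.1 h.2
    rw [extT2_lt (x := ⟨Kx, fx, gx⟩) h.2] at h1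
    rw [extT2_lt (x := ⟨Kx, fy, gy⟩) h.2] at h2
    exact h1.symm.trans h2

end MeasAux


section Decomp

open MeasureTheory

variable {E : Type*} [DecidableEq E] [Countable E] [MeasurableSpace E]
  [MeasurableSingletonClass E]

lemma measure_decomp1 (μ : Measure (ℕ → E × ℕ+)) [IsProbabilityMeasure μ]
    (hrec : μ (RecSet E) = 1) (i : E) (n : ℕ) (jvE : ℕ → E)
    (W : ℕ → Set (ℕ → E × ℕ+)) (hW : ∀ K, MeasurableSet (W K)) :
    μ {ω | (∀ r < n, visitNext i r ω = jvE r) ∧ ω ∈ W (visit i n ω)} =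
      ∑' x : {x : PathIdx E // good1 i n jvE x.1 (extE x)},
        μ (cylL x.1.1 (extE x.1) ∩ W x.1.1) := by
  have key : {ω : ℕ → E × ℕ+ | (∀ r < n, visitNext i r ω = jvE r) ∧
        ω ∈ W (visit i n ω)} ∩ RecSet E =
      (⋃ x : {x : PathIdx E // good1 i n jvE x.1 (extE x)},
        cylL x.1.1 (extE x.1) ∩ W x.1.1) ∩ RecSet E := by
    ext ω
    constructor
    · rintro ⟨⟨hA, hWω⟩, hRec⟩
      set x0 : PathIdx E := ⟨visit i n ω, fun h => (ω h.1).1⟩ with hx0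
      have hagree : ∀ h ≤ x0.1, (fun h' => (ω h').1) h = extE x0 h := by
        intro h hh
        rw [extE_le hh]
      have hg : good1 i n jvE x0.1 (extE x0) :=
        (good1_congr hagree).1 (good1_of_mem_A (hRec i) hA)
      refine ⟨Set.mem_iUnion.2 ⟨⟨x0, hg⟩, ⟨fun h hh => (hagree h hh), hWω⟩⟩, hRec⟩
    · rintro ⟨hU, hRec⟩
      obtain ⟨⟨x, hgx⟩, hωx, hωW⟩ := Set.mem_iUnion.1 hU
      have hagree : ∀ h ≤ x.1, (fun h' => (ω h').1) h = extE x h := fun h hh => hωx h hh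
      have hg : good1 i n jvE x.1 (fun h' => (ω h').1) := (good1_congr hagree).2 hgx
      obtain ⟨hA, hvis⟩ := mem_A_of_good1 (hRec i) hg
      exact ⟨⟨hA, by rw [hvis]; exact hωW⟩, hRec⟩
  calc μ {ω : ℕ → E × ℕ+ | (∀ r < n, visitNext i r ω = jvE r) ∧ ω ∈ W (visit i n ω)}
      = μ ({ω : ℕ → E × ℕ+ | (∀ r < n, visitNext i r ω = jvE r) ∧
          ω ∈ W (visit i n ω)} ∩ RecSet E) := measure_eq_inter_rec μ hrec _
    _ = μ ((⋃ x : {x : PathIdx E // good1 i n jvE x.1 (extE x)},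
          cylL x.1.1 (extE x.1) ∩ W x.1.1) ∩ RecSet E) := by rw [key]
    _ = μ (⋃ x : {x : PathIdx E // good1 i n jvE x.1 (extE x)},
          cylL x.1.1 (extE x.1) ∩ W x.1.1) := (measure_eq_inter_rec μ hrec _).symm
    _ = ∑' x : {x : PathIdx E // good1 i n jvE x.1 (extE x)},
          μ (cylL x.1.1 (extE x.1) ∩ W x.1.1) := by
        refine measure_iUnion ?_ fun x => (measSet_cylL _ _).inter (hW _)
        intro x y hxy
        exact Disjoint.mono Set.inter_subset_left Set.inter_subset_left
          (good1_cyl_disjoint x.2 y.2 (fun h => hxy (Subtype.ext h)))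

lemma measure_decomp2 (μ : Measure (ℕ → E × ℕ+)) [IsProbabilityMeasure μ]
    (hrec : μ (RecSet E) = 1) (i : E) (n : ℕ) (τE : ℕ → ℕ+)
    (W : ℕ → Set (ℕ → E × ℕ+)) (hW : ∀ K, MeasurableSet (W K)) :
    μ {ω | (∀ r < n, visitHold i r ω = τE r) ∧ ω ∈ W (visit i n ω)} =
      ∑' x : {x : PathIdx2 E // good2 i n τE x.1 (extE2 x) (extT2 x)},
        μ (cylLT x.1.1 (extE2 x.1) (extT2 x.1) ∩ W x.1.1) := by
  have key : {ω : ℕ → E × ℕ+ | (∀ r < n, visitHold i r ω = τE r) ∧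
        ω ∈ W (visit i n ω)} ∩ RecSet E =
      (⋃ x : {x : PathIdx2 E // good2 i n τE x.1 (extE2 x) (extT2 x)},
        cylLT x.1.1 (extE2 x.1) (extT2 x.1) ∩ W x.1.1) ∩ RecSet E := by
    ext ω
    constructor
    · rintro ⟨⟨hA, hWω⟩, hRec⟩
      set x0 : PathIdx2 E := ⟨visit i n ω, fun h => (ω h.1).1, fun h => (ω h.1).2⟩ with hx0
      have hagree : ∀ h ≤ x0.1, (fun h' => (ω h').1) h = extE2 x0 h := by
        intro h hh
        rw [extE2_le hh]
      have hagreeT : ∀ h < x0.1, (fun h' => (ω h').2) h = extT2 x0 h := by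
        intro h hh
        rw [extT2_lt hh]
      have hg : good2 i n τE x0.1 (extE2 x0) (extT2 x0) :=
        (good2_congr hagree hagreeT).1 (good2_of_mem_B (hRec i) hA)
      exact ⟨Set.mem_iUnion.2 ⟨⟨x0, hg⟩,
        ⟨⟨fun h hh => hagree h hh, fun h hh => hagreeT h hh⟩, hWω⟩⟩, hRec⟩
    · rintro ⟨hU, hRec⟩
      obtain ⟨⟨x, hgx⟩, hωx, hωW⟩ := Set.mem_iUnion.1 hU
      have hagree : ∀ h ≤ x.1, (fun h' => (ω h').1) h = extE2 x h := fun h hh => hωx.1 h hh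
      have hagreeT : ∀ h < x.1, (fun h' => (ω h').2) h = extT2 x h := fun h hh => hωx.2 h hh
      have hg : good2 i n τE x.1 (fun h' => (ω h').1) (fun h' => (ω h').2) :=
        (good2_congr hagree hagreeT).2 hgx
      obtain ⟨hA, hvis⟩ := mem_B_of_good2 (hRec i) hg
      exact ⟨⟨hA, by rw [hvis]; exact hωW⟩, hRec⟩
  calc μ {ω : ℕ → E × ℕ+ | (∀ r < n, visitHold i r ω = τE r) ∧ ω ∈ W (visit i n ω)}
      = μ ({ω : ℕ → E × ℕ+ | (∀ r < n, visitHold i r ω = τE r) ∧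
          ω ∈ W (visit i n ω)} ∩ RecSet E) := measure_eq_inter_rec μ hrec _
    _ = μ ((⋃ x : {x : PathIdx2 E // good2 i n τE x.1 (extE2 x) (extT2 x)},
          cylLT x.1.1 (extE2 x.1) (extT2 x.1) ∩ W x.1.1) ∩ RecSet E) := by rw [key]
    _ = μ (⋃ x : {x : PathIdx2 E // good2 i n τE x.1 (extE2 x) (extT2 x)},
          cylLT x.1.1 (extE2 x.1) (extT2 x.1) ∩ W x.1.1) :=
        (measure_eq_inter_rec μ hrec _).symm
    _ = ∑' x : {x : PathIdx2 E // good2 i n τE x.1 (extE2 x) (extT2 x)},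
          μ (cylLT x.1.1 (extE2 x.1) (extT2 x.1) ∩ W x.1.1) := by
        refine measure_iUnion ?_ fun x => (measSet_cylLT _ _ _).inter (hW _)
        intro x y hxy
        exact Disjoint.mono Set.inter_subset_left Set.inter_subset_left
          (good2_cyl_disjoint x.2 y.2 (fun h => hxy (Subtype.ext h)))

end Decomp


section StepLemmas

open MeasureTheory Finset

variable {E : Type*} [DecidableEq E] [Countable E] [MeasurableSpace E]
  [MeasurableSingletonClass E]

def extT (K : ℕ) (tv : Fin K → ℕ+) : ℕ → ℕ+ :=
  fun h => if hh : h < K then tv ⟨h, hh⟩ else 1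

lemma extT_lt {K : ℕ} {tv : Fin K → ℕ+} {h : ℕ} (hh : h < K) :
    extT K tv h = tv ⟨h, hh⟩ := dif_pos hh

/-- partitioning a state cylinder according to the holding times before `K`. -/
lemma measure_cylL_partition (μ : Measure (ℕ → E × ℕ+)) (K : ℕ) (l : ℕ → E)
    (V : Set (ℕ → E × ℕ+)) (hV : MeasurableSet V) :
    μ (cylL K l ∩ V) = ∑' tv : Fin K → ℕ+, μ (cylLT K l (extT K tv) ∩ V) := by
  have key : cylL K l ∩ V = ⋃ tv : Fin K → ℕ+, cylLT K l (extT K tv) ∩ V := by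
    ext ω
    constructor
    · rintro ⟨hω, hV⟩
      exact Set.mem_iUnion.2 ⟨fun h => (ω h.1).2,
        ⟨⟨hω, fun h hh => (extT_lt (tv := fun h' => (ω h'.1).2) hh).symm⟩, hV⟩⟩
    · rintro ⟨S, ⟨tv, rfl⟩, ⟨h1, _⟩, hV⟩
      exact ⟨h1, hV⟩
  rw [key]
  refine measure_iUnion ?_ fun tv => (measSet_cylLT _ _ _).inter hV
  intro tv tv' hne
  simp only [Function.onFun]
  rw [Set.disjoint_left]
  rintro ω ⟨⟨_, h2⟩, _⟩ ⟨⟨_, h2'⟩, _⟩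
  apply hne
  funext h
  have e1 := (h2 h.1 h.2).trans (extT_lt (tv := tv) h.2)
  have e2 := (h2' h.1 h.2).trans (extT_lt (tv := tv') h.2)
  exact (Fin.eta h h.2) ▸ (e1.symm.trans e2)

/-- partitioning according to the state at time `K + 1`. -/
lemma measure_partition_next (μ : Measure (ℕ → E × ℕ+)) (K : ℕ)
    (S : Set (ℕ → E × ℕ+)) (hS : MeasurableSet S) :
    μ S = ∑' j : E, μ (S ∩ {ω | (ω (K + 1)).1 = j}) := by
  have key : S = ⋃ j : E, S ∩ {ω | (ω (K + 1)).1 = j} := by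
    ext ω
    constructor
    · intro hω
      exact Set.mem_iUnion.2 ⟨(ω (K + 1)).1, hω, rfl⟩
    · rintro ⟨T, ⟨j, rfl⟩, hω, _⟩
      exact hω
  conv_lhs => rw [key]
  refine measure_iUnion ?_ fun j => hS.inter (measSet_fst _ _)
  intro j j' hne
  simp only [Function.onFun]
  rw [Set.disjoint_left]
  rintro ω ⟨_, h1⟩ ⟨_, h2⟩
  exact hne (h1.symm.trans h2)

/-- the total number of transitions out of visits to `l K`. -/
lemma tsum_card_next (l : ℕ → E) (K : ℕ) :
    ∑' j : E, (((Finset.range K).filter (fun h => l h = l K ∧ l (h + 1) = j)).card :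
      ENNReal) = (((Finset.range K).filter (fun h => l h = l K)).card : ENNReal) := by
  classical
  set s : Finset E := (Finset.range K).image (fun h => l (h + 1)) with hs
  have hzero : ∀ j ∉ s,
      (((Finset.range K).filter (fun h => l h = l K ∧ l (h + 1) = j)).card :
        ENNReal) = 0 := by
    intro j hj
    norm_cast
    rw [Finset.card_eq_zero, Finset.filter_eq_empty_iff]
    intro h hh hcontra
    exact hj (hs ▸ Finset.mem_image.2 ⟨h, hh, hcontra.2⟩)
  rw [tsum_eq_sum hzero, ← Nat.cast_sum]
  norm_cast
  rw [Finset.card_eq_sum_card_fiberwise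
    (f := fun h => l (h + 1)) (t := s) (fun x hx => by
      exact Finset.mem_image.2 ⟨x, Finset.mem_of_mem_filter x hx, rfl⟩)]
  refine (Finset.sum_congr rfl fun j _ => ?_).symm
  rw [Finset.filter_filter]

/-- the Pólya predictive weights sum to one. -/
lemma tsum_polya_weight (m : E → E → ENNReal) (i : E)
    (hmpos : 0 < ∑' j, m i j) (hmfin : ∑' j, m i j ≠ ⊤)
    (l : ℕ → E) (K : ℕ) (hlK : l K = i) :
    ∑' j : E, (m (l K) j +
        (((Finset.range K).filter (fun h => l h = l K ∧ l (h + 1) = j)).card : ENNReal)) /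
      ((∑' e, m (l K) e) + (((Finset.range K).filter (fun h => l h = l K)).card : ENNReal))
      = 1 := by
  subst hlK
  set D := (∑' e, m (l K) e) +
    (((Finset.range K).filter (fun h => l h = l K)).card : ENNReal) with hD
  have hsum : ∑' j : E, (m (l K) j +
      (((Finset.range K).filter (fun h => l h = l K ∧ l (h + 1) = j)).card : ENNReal)) = D := by
    rw [ENNReal.tsum_add, tsum_card_next]
  have h1 : ∑' j : E, (m (l K) j +
      (((Finset.range K).filter (fun h => l h = l K ∧ l (h + 1) = j)).card : ENNReal)) / D
      = D / D := by
    rw [← hsum]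
    simp only [div_eq_mul_inv]
    exact ENNReal.tsum_mul_right
  rw [h1]
  exact ENNReal.div_self (lt_of_lt_of_le hmpos le_self_add).ne'
    (ENNReal.add_ne_top.2 ⟨hmfin, ENNReal.natCast_ne_top _⟩)

end StepLemmas


section HStep

open MeasureTheory Finset

variable {E : Type*} [DecidableEq E] [Countable E] [MeasurableSpace E]
  [MeasurableSingletonClass E]

/-- the beta-Stacy predictive survival product along a history. -/
noncomputable def hazProd (c F0 : E → ℕ+ → ENNReal) (l : ℕ → E) (tv : ℕ → ℕ+)
    (K : ℕ) (t : ℕ) : ENNReal :=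
  ∏ s ∈ Finset.range t,
    (1 - (c (l K) s.succPNat * F0 (l K) s.succPNat + dHist l tv K (l K) s.succPNat) /
      (c (l K) s.succPNat * (F0 (l K) s.succPNat + survF0 F0 (l K) s.succPNat) +
        dHist l tv K (l K) s.succPNat + wHist l tv K (l K) s.succPNat))

variable (m : E → E → ENNReal) (c F0 : E → ℕ+ → ENNReal)
  (μ : Measure (ℕ → E × ℕ+)) [IsProbabilityMeasure μ]

variable (hstep : ∀ (k : ℕ) (l : ℕ → E) (tv : ℕ → ℕ+) (j : E) (t : ℕ),
      μ {ω | (∀ h ≤ k, (ω h).1 = l h) ∧ (∀ h < k, (ω h).2 = tv h) ∧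
          t < ((ω k).2 : ℕ) ∧ (ω (k + 1)).1 = j} =
        μ {ω | (∀ h ≤ k, (ω h).1 = l h) ∧ (∀ h < k, (ω h).2 = tv h)} *
        (∏ s ∈ Finset.range t,
          (1 - (c (l k) s.succPNat * F0 (l k) s.succPNat +
                dHist l tv k (l k) s.succPNat) /
            (c (l k) s.succPNat * (F0 (l k) s.succPNat + survF0 F0 (l k) s.succPNat) +
              dHist l tv k (l k) s.succPNat + wHist l tv k (l k) s.succPNat))) *
        ((m (l k) j +
            ((Finset.range k).filter (fun h => l h = l k ∧ l (h + 1) = j)).card) /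
          ((∑' e, m (l k) e) + ((Finset.range k).filter (fun h => l h = l k)).card)))

lemma cylLT_eq_base (K : ℕ) (l : ℕ → E) (tv : ℕ → ℕ+) :
    {ω : ℕ → E × ℕ+ | (∀ h ≤ K, (ω h).1 = l h) ∧ (∀ h < K, (ω h).2 = tv h)} =
      cylLT K l tv := rfl

lemma measure_cylL_eq (K : ℕ) (l : ℕ → E) :
    μ (cylL K l) = ∑' tv : Fin K → ℕ+, μ (cylLT K l (extT K tv)) := by
  have := measure_cylL_partition μ K l Set.univ MeasurableSet.univ
  simpa [Set.inter_univ] using this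

include hstep in
/-- **Lemma M**: the Pólya step for state cylinders. -/
lemma measure_cylL_inter_next (K : ℕ) (l : ℕ → E) (j : E) :
    μ (cylL K l ∩ {ω | (ω (K + 1)).1 = j}) =
      μ (cylL K l) *
        ((m (l K) j +
            ((Finset.range K).filter (fun h => l h = l K ∧ l (h + 1) = j)).card) /
          ((∑' e, m (l K) e) + ((Finset.range K).filter (fun h => l h = l K)).card)) := by
  rw [measure_cylL_partition μ K l _ (measSet_fst _ _), measure_cylL_eq μ K l]
  have step1 : ∀ tv : Fin K → ℕ+,
      μ (cylLT K l (extT K tv) ∩ {ω | (ω (K + 1)).1 = j}) =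
        μ (cylLT K l (extT K tv)) *
        ((m (l K) j +
            ((Finset.range K).filter (fun h => l h = l K ∧ l (h + 1) = j)).card) /
          ((∑' e, m (l K) e) + ((Finset.range K).filter (fun h => l h = l K)).card)) := by
    intro tv
    have h := hstep K l (extT K tv) j 0
    rw [Finset.prod_range_zero, mul_one] at h
    have hset : {ω : ℕ → E × ℕ+ | (∀ h ≤ K, (ω h).1 = l h) ∧
        (∀ h < K, (ω h).2 = extT K tv h) ∧ 0 < ((ω K).2 : ℕ) ∧ (ω (K + 1)).1 = j} =
        cylLT K l (extT K tv) ∩ {ω | (ω (K + 1)).1 = j} := by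
      ext ω
      simp only [Set.mem_setOf_eq, Set.mem_inter_iff, cylLT]
      constructor
      · rintro ⟨a, b, _, d⟩; exact ⟨⟨a, b⟩, d⟩
      · rintro ⟨⟨a, b⟩, d⟩; exact ⟨a, b, (ω K).2.pos, d⟩
    rw [hset, cylLT_eq_base] at h
    exact h
  rw [tsum_congr step1, ENNReal.tsum_mul_right]

include hstep in
/-- the survival step for full cylinders. -/
lemma measure_cylLT_surv (i : E) (hmpos : 0 < ∑' j, m i j) (hmfin : ∑' j, m i j ≠ ⊤)
    (K : ℕ) (l : ℕ → E) (hlK : l K = i) (tv : ℕ → ℕ+) (t : ℕ) :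
    μ (cylLT K l tv ∩ {ω | t < ((ω K).2 : ℕ)}) =
      μ (cylLT K l tv) * hazProd c F0 l tv K t := by
  have hmeas : MeasurableSet (cylLT K l tv ∩ {ω : ℕ → E × ℕ+ | t < ((ω K).2 : ℕ)}) :=
    (measSet_cylLT K l tv).inter (measSet_snd K {x : ℕ+ | t < (x : ℕ)})
  rw [measure_partition_next μ K _ hmeas]
  have step1 : ∀ j : E,
      μ (cylLT K l tv ∩ {ω : ℕ → E × ℕ+ | t < ((ω K).2 : ℕ)} ∩ {ω | (ω (K + 1)).1 = j}) =
        (μ (cylLT K l tv) * hazProd c F0 l tv K t) *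
        ((m (l K) j +
            ((Finset.range K).filter (fun h => l h = l K ∧ l (h + 1) = j)).card) /
          ((∑' e, m (l K) e) + ((Finset.range K).filter (fun h => l h = l K)).card)) := by
    intro j
    have h := hstep K l tv j t
    have hset : {ω : ℕ → E × ℕ+ | (∀ h ≤ K, (ω h).1 = l h) ∧
        (∀ h < K, (ω h).2 = tv h) ∧ t < ((ω K).2 : ℕ) ∧ (ω (K + 1)).1 = j} =
        cylLT K l tv ∩ {ω : ℕ → E × ℕ+ | t < ((ω K).2 : ℕ)} ∩ {ω | (ω (K + 1)).1 = j} := by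
      ext ω
      simp only [Set.mem_setOf_eq, Set.mem_inter_iff, cylLT]
      tauto
    rw [hset, cylLT_eq_base] at h
    exact h
  rw [tsum_congr step1, ENNReal.tsum_mul_left, tsum_polya_weight m i hmpos hmfin l K hlK,
    mul_one]

include hstep in
/-- the holding-time step for full cylinders. -/
lemma measure_cylLT_hold (i : E) (hmpos : 0 < ∑' j, m i j) (hmfin : ∑' j, m i j ≠ ⊤)
    (K : ℕ) (l : ℕ → E) (hlK : l K = i) (tv : ℕ → ℕ+) (τ : ℕ+) :
    μ (cylLT K l tv ∩ {ω | (ω K).2 = τ}) =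
      μ (cylLT K l tv) *
        (hazProd c F0 l tv K ((τ : ℕ) - 1) - hazProd c F0 l tv K (τ : ℕ)) := by
  have hdiff : cylLT K l tv ∩ {ω : ℕ → E × ℕ+ | (ω K).2 = τ} =
      (cylLT K l tv ∩ {ω : ℕ → E × ℕ+ | (τ : ℕ) - 1 < ((ω K).2 : ℕ)}) \
        (cylLT K l tv ∩ {ω : ℕ → E × ℕ+ | (τ : ℕ) < ((ω K).2 : ℕ)}) := by
    ext ω
    simp only [Set.mem_inter_iff, Set.mem_diff, Set.mem_setOf_eq]
    have hτ : (1 : ℕ) ≤ (τ : ℕ) := τ.one_le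
    have hx : (1 : ℕ) ≤ ((ω K).2 : ℕ) := (ω K).2.one_le
    have hcoe : (ω K).2 = τ ↔ ((ω K).2 : ℕ) = (τ : ℕ) := by
      exact (PNat.coe_inj).symm
    constructor
    · rintro ⟨h1, h2⟩
      rw [hcoe] at h2
      exact ⟨⟨h1, by omega⟩, fun hcon => by omega⟩
    · rintro ⟨⟨h1, h2⟩, h3⟩
      refine ⟨h1, hcoe.2 ?_⟩
      by_cases hmem : (τ : ℕ) < ((ω K).2 : ℕ)
      · exact absurd ⟨h1, hmem⟩ h3
      · omega
  rw [hdiff, measure_diff ?_ ?_ (measure_ne_top μ _)]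
  · rw [measure_cylLT_surv m c F0 μ hstep i hmpos hmfin K l hlK tv ((τ : ℕ) - 1),
      measure_cylLT_surv m c F0 μ hstep i hmpos hmfin K l hlK tv (τ : ℕ),
      ENNReal.mul_sub (fun _ _ => measure_ne_top μ _)]
  · refine Set.inter_subset_inter_right _ ?_
    intro ω hω
    simp only [Set.mem_setOf_eq] at *
    omega
  · exact ((measSet_cylLT K l tv).inter (measSet_snd K {x : ℕ+ | (τ : ℕ) < (x : ℕ)})).nullMeasurableSet

end HStep


section Laws

open MeasureTheory Finset

variable {E : Type*} [DecidableEq E] [Countable E] [MeasurableSpace E]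
  [MeasurableSingletonClass E]

/-- `d`-count of the subsequence of holding times. -/
def dcnt (τE : ℕ → ℕ+) (n : ℕ) (σ : ℕ+) : ℕ :=
  ((Finset.range n).filter (fun r => τE r = σ)).card

/-- `w`-count of the subsequence of holding times. -/
def wcnt (τE : ℕ → ℕ+) (n : ℕ) (σ : ℕ+) : ℕ :=
  ((Finset.range n).filter (fun r => σ < τE r)).card

/-- the beta-Stacy predictive survival product for the subsequence at state `i`. -/
noncomputable def bsHaz (c F0 : E → ℕ+ → ENNReal) (i : E) (τE : ℕ → ℕ+)
    (n : ℕ) (t : ℕ) : ENNReal :=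
  ∏ s ∈ Finset.range t,
    (1 - (c i s.succPNat * F0 i s.succPNat + dcnt τE n s.succPNat) /
      (c i s.succPNat * (F0 i s.succPNat + survF0 F0 i s.succPNat) +
        dcnt τE n s.succPNat + wcnt τE n s.succPNat))

variable (m : E → E → ENNReal) (c F0 : E → ℕ+ → ENNReal)
  (μ : Measure (ℕ → E × ℕ+)) [IsProbabilityMeasure μ]

variable (hstep : ∀ (k : ℕ) (l : ℕ → E) (tv : ℕ → ℕ+) (j : E) (t : ℕ),
      μ {ω | (∀ h ≤ k, (ω h).1 = l h) ∧ (∀ h < k, (ω h).2 = tv h) ∧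
          t < ((ω k).2 : ℕ) ∧ (ω (k + 1)).1 = j} =
        μ {ω | (∀ h ≤ k, (ω h).1 = l h) ∧ (∀ h < k, (ω h).2 = tv h)} *
        (∏ s ∈ Finset.range t,
          (1 - (c (l k) s.succPNat * F0 (l k) s.succPNat +
                dHist l tv k (l k) s.succPNat) /
            (c (l k) s.succPNat * (F0 (l k) s.succPNat + survF0 F0 (l k) s.succPNat) +
              dHist l tv k (l k) s.succPNat + wHist l tv k (l k) s.succPNat))) *
        ((m (l k) j +
            ((Finset.range k).filter (fun h => l h = l k ∧ l (h + 1) = j)).card) /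
          ((∑' e, m (l k) e) + ((Finset.range k).filter (fun h => l h = l k)).card)))

include hstep in
/-- law of the post-visit state sequence: predictive form. -/
lemma lawA (hrec : μ (RecSet E) = 1) (i : E) (n : ℕ) (jvE : ℕ → E) :
    μ {ω | ∀ r < n, visitNext i r ω = jvE r} =
      ∏ r ∈ Finset.range n,
        ((m i (jvE r) +
            (((Finset.range r).filter (fun r' => jvE r' = jvE r)).card : ENNReal)) /
          ((∑' e, m i e) + r)) := by
  induction n with
  | zero =>
    have : {ω : ℕ → E × ℕ+ | ∀ r < 0, visitNext i r ω = jvE r} = Set.univ := by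
      ext ω; simp
    rw [this, Finset.prod_range_zero, measure_univ]
  | succ n ih =>
    have hd1 := measure_decomp1 μ hrec i n jvE
      (fun K => {ω : ℕ → E × ℕ+ | (ω (K + 1)).1 = jvE n})
      (fun K => measSet_fst (K + 1) (jvE n))
    have hd0 := measure_decomp1 μ hrec i n jvE (fun _ => Set.univ)
      (fun _ => MeasurableSet.univ)
    simp only [Set.inter_univ] at hd0
    have hset1 : {ω : ℕ → E × ℕ+ | (∀ r < n, visitNext i r ω = jvE r) ∧
        ω ∈ {ω' : ℕ → E × ℕ+ | (ω' (visit i n ω + 1)).1 = jvE n}} =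
        {ω : ℕ → E × ℕ+ | ∀ r < n + 1, visitNext i r ω = jvE r} := by
      ext ω
      simp only [Set.mem_setOf_eq]
      constructor
      · rintro ⟨hA, hn⟩ r hr
        rcases Nat.lt_succ_iff_lt_or_eq.1 hr with hr' | rfl
        · exact hA r hr'
        · exact hn
      · intro hA
        exact ⟨fun r hr => hA r (by omega), hA n (by omega)⟩
    have hset0 : {ω : ℕ → E × ℕ+ | (∀ r < n, visitNext i r ω = jvE r) ∧
        ω ∈ (Set.univ : Set (ℕ → E × ℕ+))} =
        {ω : ℕ → E × ℕ+ | ∀ r < n, visitNext i r ω = jvE r} := by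
      ext ω; simp
    rw [hset1] at hd1
    rw [hset0] at hd0
    have hterm : ∀ x : {x : PathIdx E // good1 i n jvE x.1 (extE x)},
        μ (cylL x.1.1 (extE x.1) ∩ {ω : ℕ → E × ℕ+ | (ω (x.1.1 + 1)).1 = jvE n}) =
          μ (cylL x.1.1 (extE x.1)) *
            ((m i (jvE n) +
              (((Finset.range n).filter (fun r' => jvE r' = jvE n)).card : ENNReal)) /
            ((∑' e, m i e) + n)) := by
      rintro ⟨x, hgx⟩
      have h := measure_cylL_inter_next m c F0 μ hstep x.1 (extE x) (jvE n)
      obtain ⟨hg1, hg2, hg3⟩ := hgx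
      rw [hg1] at h
      have hcard1 : ((Finset.range x.1).filter
          (fun h' => extE x h' = i ∧ extE x (h' + 1) = jvE n)).card =
          ((Finset.range n).filter (fun r' => jvE r' = jvE n)).card :=
        card_filter_visits hg2 (fun h' => extE x (h' + 1) = jvE n)
          (fun r' => jvE r' = jvE n) (fun h' hh' hi => by simp only [hg3 h' hh' hi])
      have hcard2 : ((Finset.range x.1).filter (fun h' => extE x h' = i)).card = n := hg2
      rw [hcard1, hcard2] at h
      exact h
    calc μ {ω : ℕ → E × ℕ+ | ∀ r < n + 1, visitNext i r ω = jvE r}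
        = ∑' x : {x : PathIdx E // good1 i n jvE x.1 (extE x)},
            μ (cylL x.1.1 (extE x.1) ∩ {ω : ℕ → E × ℕ+ | (ω (x.1.1 + 1)).1 = jvE n}) := hd1
      _ = ∑' x : {x : PathIdx E // good1 i n jvE x.1 (extE x)},
            μ (cylL x.1.1 (extE x.1)) *
            ((m i (jvE n) +
              (((Finset.range n).filter (fun r' => jvE r' = jvE n)).card : ENNReal)) /
            ((∑' e, m i e) + n)) := tsum_congr hterm
      _ = μ {ω : ℕ → E × ℕ+ | ∀ r < n, visitNext i r ω = jvE r} *
            ((m i (jvE n) +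
              (((Finset.range n).filter (fun r' => jvE r' = jvE n)).card : ENNReal)) /
            ((∑' e, m i e) + n)) := by
          rw [ENNReal.tsum_mul_right, ← hd0]
      _ = ∏ r ∈ Finset.range (n + 1),
          ((m i (jvE r) +
              (((Finset.range r).filter (fun r' => jvE r' = jvE r)).card : ENNReal)) /
            ((∑' e, m i e) + r)) := by
          rw [ih, Finset.prod_range_succ]

include hstep in
/-- law of the holding-time sequence: predictive form. -/
lemma lawB (hrec : μ (RecSet E) = 1) (i : E)
    (hmpos : 0 < ∑' j, m i j) (hmfin : ∑' j, m i j ≠ ⊤) (n : ℕ) (τE : ℕ → ℕ+) :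
    μ {ω | ∀ r < n, visitHold i r ω = τE r} =
      ∏ r ∈ Finset.range n,
        (bsHaz c F0 i τE r ((τE r : ℕ) - 1) - bsHaz c F0 i τE r (τE r : ℕ)) := by
  induction n with
  | zero =>
    have : {ω : ℕ → E × ℕ+ | ∀ r < 0, visitHold i r ω = τE r} = Set.univ := by
      ext ω; simp
    rw [this, Finset.prod_range_zero, measure_univ]
  | succ n ih =>
    have hd1 := measure_decomp2 μ hrec i n τE
      (fun K => {ω : ℕ → E × ℕ+ | (ω K).2 = τE n})
      (fun K => measSet_snd K {τE n})
    have hd0 := measure_decomp2 μ hrec i n τE (fun _ => Set.univ)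
      (fun _ => MeasurableSet.univ)
    simp only [Set.inter_univ] at hd0
    have hset1 : {ω : ℕ → E × ℕ+ | (∀ r < n, visitHold i r ω = τE r) ∧
        ω ∈ {ω' : ℕ → E × ℕ+ | (ω' (visit i n ω)).2 = τE n}} =
        {ω : ℕ → E × ℕ+ | ∀ r < n + 1, visitHold i r ω = τE r} := by
      ext ω
      simp only [Set.mem_setOf_eq]
      constructor
      · rintro ⟨hA, hn⟩ r hr
        rcases Nat.lt_succ_iff_lt_or_eq.1 hr with hr' | rfl
        · exact hA r hr'
        · exact hn
      · intro hA
        exact ⟨fun r hr => hA r (by omega), hA n (by omega)⟩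
    have hset0 : {ω : ℕ → E × ℕ+ | (∀ r < n, visitHold i r ω = τE r) ∧
        ω ∈ (Set.univ : Set (ℕ → E × ℕ+))} =
        {ω : ℕ → E × ℕ+ | ∀ r < n, visitHold i r ω = τE r} := by
      ext ω; simp
    rw [hset1] at hd1
    rw [hset0] at hd0
    have hterm : ∀ x : {x : PathIdx2 E // good2 i n τE x.1 (extE2 x) (extT2 x)},
        μ (cylLT x.1.1 (extE2 x.1) (extT2 x.1) ∩
            {ω : ℕ → E × ℕ+ | (ω x.1.1).2 = τE n}) =
          μ (cylLT x.1.1 (extE2 x.1) (extT2 x.1)) *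
            (bsHaz c F0 i τE n ((τE n : ℕ) - 1) - bsHaz c F0 i τE n (τE n : ℕ)) := by
      rintro ⟨x, hgx⟩
      have h := measure_cylLT_hold m c F0 μ hstep i hmpos hmfin x.1 (extE2 x) hgx.1
        (extT2 x) (τE n)
      obtain ⟨hg1, hg2, hg3⟩ := hgx
      have hhaz : ∀ t : ℕ, hazProd c F0 (extE2 x) (extT2 x) x.1 t =
          bsHaz c F0 i τE n t := by
        intro t
        unfold hazProd bsHaz
        refine Finset.prod_congr rfl fun s _ => ?_
        have hd : dHist (extE2 x) (extT2 x) x.1 (extE2 x x.1) s.succPNat =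
            dcnt τE n s.succPNat := by
          unfold dHist dcnt
          rw [hg1]
          exact card_filter_visits hg2 (fun h' => extT2 x h' = s.succPNat)
            (fun r' => τE r' = s.succPNat) (fun h' hh' hi => by simp only [hg3 h' hh' hi])
        have hw : wHist (extE2 x) (extT2 x) x.1 (extE2 x x.1) s.succPNat =
            wcnt τE n s.succPNat := by
          unfold wHist wcnt
          rw [hg1]
          exact card_filter_visits hg2 (fun h' => s.succPNat < extT2 x h')
            (fun r' => s.succPNat < τE r') (fun h' hh' hi => by simp only [hg3 h' hh' hi])
        rw [hd, hw, hg1]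
      rw [hhaz, hhaz] at h
      exact h
    calc μ {ω : ℕ → E × ℕ+ | ∀ r < n + 1, visitHold i r ω = τE r}
        = ∑' x : {x : PathIdx2 E // good2 i n τE x.1 (extE2 x) (extT2 x)},
            μ (cylLT x.1.1 (extE2 x.1) (extT2 x.1) ∩
              {ω : ℕ → E × ℕ+ | (ω x.1.1).2 = τE n}) := hd1
      _ = ∑' x : {x : PathIdx2 E // good2 i n τE x.1 (extE2 x) (extT2 x)},
            μ (cylLT x.1.1 (extE2 x.1) (extT2 x.1)) *
            (bsHaz c F0 i τE n ((τE n : ℕ) - 1) - bsHaz c F0 i τE n (τE n : ℕ)) :=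
          tsum_congr hterm
      _ = μ {ω : ℕ → E × ℕ+ | ∀ r < n, visitHold i r ω = τE r} *
            (bsHaz c F0 i τE n ((τE n : ℕ) - 1) - bsHaz c F0 i τE n (τE n : ℕ)) := by
          rw [ENNReal.tsum_mul_right, ← hd0]
      _ = ∏ r ∈ Finset.range (n + 1),
            (bsHaz c F0 i τE r ((τE r : ℕ) - 1) - bsHaz c F0 i τE r (τE r : ℕ)) := by
          rw [ih, Finset.prod_range_succ]

end Laws


section Algebra1

open Finset

lemma prod_div_ennreal {ι : Type*} (s : Finset ι) (f g : ι → ENNReal)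
    (hg : ∀ r ∈ s, g r ≠ 0 ∧ g r ≠ ⊤) :
    ∏ r ∈ s, f r / g r = (∏ r ∈ s, f r) / (∏ r ∈ s, g r) := by
  induction s using Finset.cons_induction with
  | empty => simp
  | cons a s ha ih =>
    rw [Finset.prod_cons, Finset.prod_cons, Finset.prod_cons,
      ih (fun r hr => hg r (Finset.mem_cons_of_mem hr)),
      div_eq_mul_inv, div_eq_mul_inv, div_eq_mul_inv,
      ENNReal.mul_inv (Or.inl (hg a (Finset.mem_cons_self a s)).1)
        (Or.inl (hg a (Finset.mem_cons_self a s)).2)]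
    ring

lemma ediv_helper (A B C d e : ENNReal) (hC : C ≠ 0) (hC' : C ≠ ⊤)
    (he : e ≠ 0) (he' : e ≠ ⊤) :
    (A * d) * B / (C * e) = A * B / C * (d / e) := by
  rw [div_eq_mul_inv, div_eq_mul_inv, div_eq_mul_inv,
    ENNReal.mul_inv (Or.inl hC) (Or.inl hC')]
  ring

variable {E : Type*} [DecidableEq E]

/-- grouping the Pólya numerator factors by state. -/
lemma polya_num_eq (f : E → ENNReal) (jvE : ℕ → E) (n : ℕ) :
    ∏ r ∈ Finset.range n,
      (f (jvE r) + (((Finset.range r).filter (fun r' => jvE r' = jvE r)).card : ENNReal))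
      = ∏' e : E, ∏ h ∈ Finset.range
          (((Finset.range n).filter (fun r => jvE r = e)).card), (f e + h) := by
  induction n with
  | zero =>
    rw [Finset.prod_range_zero]
    have : ∀ e : E, ∏ h ∈ Finset.range
        (((Finset.range 0).filter (fun r => jvE r = e)).card), (f e + h) = 1 := by
      intro e; simp
    rw [tprod_congr this, tprod_one]
  | succ n ih =>
    set s : Finset E := (Finset.range (n + 1)).image jvE with hs
    have hmem : jvE n ∈ s := Finset.mem_image.2 ⟨n, Finset.self_mem_range_succ n, rfl⟩
    have hcount : ∀ e : E, ((Finset.range (n + 1)).filter (fun r => jvE r = e)).card =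
        ((Finset.range n).filter (fun r => jvE r = e)).card +
          if jvE n = e then 1 else 0 := by
      intro e
      rw [Finset.range_add_one, Finset.filter_insert]
      by_cases hje : jvE n = e
      · rw [if_pos hje, if_pos hje, Finset.card_insert_of_notMem
          (fun hmem' => absurd (Finset.mem_of_mem_filter n hmem') (by simp))]
      · rw [if_neg hje, if_neg hje, Nat.add_zero]
    have hoff : ∀ e ∉ s, ((Finset.range (n + 1)).filter (fun r => jvE r = e)).card = 0 := by
      intro e he
      rw [Finset.card_eq_zero, Finset.filter_eq_empty_iff]
      intro r hr hcon
      exact he (Finset.mem_image.2 ⟨r, hr, hcon⟩)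
    have hoff' : ∀ e ∉ s, ((Finset.range n).filter (fun r => jvE r = e)).card = 0 := by
      intro e he
      rw [Finset.card_eq_zero, Finset.filter_eq_empty_iff]
      intro r hr hcon
      exact he (Finset.mem_image.2 ⟨r, Finset.mem_range.2 (by
        have := Finset.mem_range.1 hr; omega), hcon⟩)
    have h1 : ∏' e : E, ∏ h ∈ Finset.range
        (((Finset.range (n + 1)).filter (fun r => jvE r = e)).card), (f e + h) =
        ∏ e ∈ s, ∏ h ∈ Finset.range
          (((Finset.range (n + 1)).filter (fun r => jvE r = e)).card), (f e + h) :=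
      tprod_eq_prod (fun e he => by rw [hoff e he, Finset.range_zero, Finset.prod_empty])
    have h2 : ∏' e : E, ∏ h ∈ Finset.range
        (((Finset.range n).filter (fun r => jvE r = e)).card), (f e + h) =
        ∏ e ∈ s, ∏ h ∈ Finset.range
          (((Finset.range n).filter (fun r => jvE r = e)).card), (f e + h) :=
      tprod_eq_prod (fun e he => by rw [hoff' e he, Finset.range_zero, Finset.prod_empty])
    have h3 : ∀ e ∈ s, ∏ h ∈ Finset.range
        (((Finset.range (n + 1)).filter (fun r => jvE r = e)).card), (f e + h) =
        (∏ h ∈ Finset.range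
          (((Finset.range n).filter (fun r => jvE r = e)).card), (f e + h)) *
        (if jvE n = e then
          f e + (((Finset.range n).filter (fun r => jvE r = e)).card : ENNReal) else 1) := by
      intro e _
      rw [hcount e]
      split
      · rw [Finset.prod_range_succ]
      · rw [Nat.add_zero, mul_one]
    rw [Finset.prod_range_succ, ih, h1, h2, Finset.prod_congr rfl h3,
      Finset.prod_mul_distrib, Finset.prod_ite_eq, if_pos hmem]

end Algebra1


section Algebra2

open Finset

lemma ascFac_zero (x : ENNReal) : ascFac x 0 = 1 := Finset.prod_range_zero _

lemma ascFac_succ (x : ENNReal) (k : ℕ) : ascFac x (k + 1) = ascFac x k * (x + k) :=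
  Finset.prod_range_succ _ _

lemma ascFac_ne_zero {x : ENNReal} (hx : x ≠ 0) (k : ℕ) : ascFac x k ≠ 0 :=
  Finset.prod_ne_zero_iff.2 fun h _ => fun hcon => hx (add_eq_zero.1 hcon).1

lemma ascFac_ne_top {x : ENNReal} (hx : x ≠ ⊤) (k : ℕ) : ascFac x k ≠ ⊤ :=
  ENNReal.prod_ne_top fun h _ => ENNReal.add_ne_top.2 ⟨hx, ENNReal.natCast_ne_top h⟩

variable {E : Type*} [DecidableEq E]

lemma dcnt_succ (τE : ℕ → ℕ+) (n : ℕ) (σ : ℕ+) :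
    dcnt τE (n + 1) σ = dcnt τE n σ + if τE n = σ then 1 else 0 := by
  unfold dcnt
  rw [Finset.range_add_one, Finset.filter_insert]
  by_cases hje : τE n = σ
  · rw [if_pos hje, if_pos hje, Finset.card_insert_of_notMem
      (fun hmem' => absurd (Finset.mem_of_mem_filter n hmem') (by simp))]
  · rw [if_neg hje, if_neg hje, Nat.add_zero]

lemma wcnt_succ (τE : ℕ → ℕ+) (n : ℕ) (σ : ℕ+) :
    wcnt τE (n + 1) σ = wcnt τE n σ + if σ < τE n then 1 else 0 := by
  unfold wcnt
  rw [Finset.range_add_one, Finset.filter_insert]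
  by_cases hje : σ < τE n
  · rw [if_pos hje, if_pos hje, Finset.card_insert_of_notMem
      (fun hmem' => absurd (Finset.mem_of_mem_filter n hmem') (by simp))]
  · rw [if_neg hje, if_neg hje, Nat.add_zero]

/-- per-level ratio of ascending factorials. -/
noncomputable def ratioPN (c F0 : E → ℕ+ → ENNReal) (i : E) (τE : ℕ → ℕ+)
    (n : ℕ) (σ : ℕ+) : ENNReal :=
  ascFac (c i σ * F0 i σ) (dcnt τE n σ) *
    ascFac (c i σ * survF0 F0 i σ) (wcnt τE n σ) /
    ascFac (c i σ * F0 i σ + c i σ * survF0 F0 i σ) (dcnt τE n σ + wcnt τE n σ)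

/-- the multiplicative update factor at level `σ` when a new time `τE n` arrives. -/
noncomputable def bsfacP (c F0 : E → ℕ+ → ENNReal) (i : E) (τE : ℕ → ℕ+)
    (n : ℕ) (σ : ℕ+) : ENNReal :=
  if τE n = σ then
    (c i σ * F0 i σ + dcnt τE n σ) /
      (c i σ * (F0 i σ + survF0 F0 i σ) + dcnt τE n σ + wcnt τE n σ)
  else if σ < τE n then
    (c i σ * survF0 F0 i σ + wcnt τE n σ) /
      (c i σ * (F0 i σ + survF0 F0 i σ) + dcnt τE n σ + wcnt τE n σ)
  else 1

variable {c F0 : E → ℕ+ → ENNReal} {i : E}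

section Facts

variable (hc : ∀ s, 0 < c i s ∧ c i s ≠ ⊤) (hF0 : ∀ s, 0 < F0 i s)
  (hF0sum : ∑' s, F0 i s = 1)

include hF0sum in
lemma F0_le_one (σ : ℕ+) : F0 i σ ≤ 1 := hF0sum ▸ ENNReal.le_tsum σ

include hF0sum in
lemma survF0_le_one (σ : ℕ+) : survF0 F0 i σ ≤ 1 := by
  unfold survF0
  calc ∑' r : ℕ+, (if σ < r then F0 i r else 0) ≤ ∑' r : ℕ+, F0 i r :=
        ENNReal.tsum_le_tsum (fun r => by split <;> simp)
    _ = 1 := hF0sum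

include hc hF0 hF0sum in
lemma A_facts (σ : ℕ+) : c i σ * F0 i σ ≠ 0 ∧ c i σ * F0 i σ ≠ ⊤ ∧
    c i σ * survF0 F0 i σ ≠ ⊤ := by
  refine ⟨?_, ?_, ?_⟩
  · exact mul_ne_zero (hc σ).1.ne' (hF0 σ).ne'
  · exact ENNReal.mul_ne_top (hc σ).2 (lt_of_le_of_lt (F0_le_one hF0sum σ) (by simp)).ne
  · exact ENNReal.mul_ne_top (hc σ).2 (lt_of_le_of_lt (survF0_le_one hF0sum σ) (by simp)).ne

include hc hF0 hF0sum in
lemma den_facts (σ : ℕ+) (d w : ℕ) :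
    (c i σ * (F0 i σ + survF0 F0 i σ) + (d : ENNReal) + w) ≠ 0 ∧
      (c i σ * (F0 i σ + survF0 F0 i σ) + (d : ENNReal) + w) ≠ ⊤ ∧
      (c i σ * (F0 i σ + survF0 F0 i σ) + (d : ENNReal) + w) =
        (c i σ * F0 i σ + d) + (c i σ * survF0 F0 i σ + w) := by
  obtain ⟨hA0, hAt, hBt⟩ := A_facts hc hF0 hF0sum σ
  refine ⟨?_, ?_, by rw [mul_add]; ring⟩
  · rw [mul_add]
    intro hcon
    exact hA0 (add_eq_zero.1 (add_eq_zero.1 (add_eq_zero.1 hcon).1).1).1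
  · rw [mul_add]
    exact ENNReal.add_ne_top.2 ⟨ENNReal.add_ne_top.2
      ⟨ENNReal.add_ne_top.2 ⟨hAt, hBt⟩, ENNReal.natCast_ne_top d⟩, ENNReal.natCast_ne_top w⟩

include hc hF0 hF0sum in
lemma one_sub_haz (σ : ℕ+) (d w : ℕ) :
    1 - (c i σ * F0 i σ + (d : ENNReal)) /
        (c i σ * (F0 i σ + survF0 F0 i σ) + (d : ENNReal) + w) =
      (c i σ * survF0 F0 i σ + (w : ENNReal)) /
        (c i σ * (F0 i σ + survF0 F0 i σ) + (d : ENNReal) + w) := by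
  obtain ⟨hA0, hAt, hBt⟩ := A_facts hc hF0 hF0sum σ
  obtain ⟨hD0, hDt, hDeq⟩ := den_facts hc hF0 hF0sum σ d w
  set D := c i σ * (F0 i σ + survF0 F0 i σ) + (d : ENNReal) + w with hD
  have hsum : (c i σ * survF0 F0 i σ + (w : ENNReal)) / D +
      (c i σ * F0 i σ + (d : ENNReal)) / D = 1 := by
    rw [ENNReal.div_add_div_same, show c i σ * survF0 F0 i σ + (w : ENNReal) +
      (c i σ * F0 i σ + (d : ENNReal)) = D from by rw [hDeq]; ring,
      ENNReal.div_self hD0 hDt]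
  exact ENNReal.sub_eq_of_eq_add
    (ENNReal.div_lt_top (ENNReal.add_ne_top.2 ⟨hAt, ENNReal.natCast_ne_top d⟩) hD0).ne
    hsum.symm

include hc hF0 hF0sum in
lemma bsHaz_eq_surv_prod (τE : ℕ → ℕ+) (n : ℕ) (t : ℕ) :
    bsHaz c F0 i τE n t = ∏ s ∈ Finset.range t,
      (c i s.succPNat * survF0 F0 i s.succPNat + (wcnt τE n s.succPNat : ENNReal)) /
        (c i s.succPNat * (F0 i s.succPNat + survF0 F0 i s.succPNat) +
          dcnt τE n s.succPNat + wcnt τE n s.succPNat) := by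
  unfold bsHaz
  exact Finset.prod_congr rfl fun s _ => one_sub_haz hc hF0 hF0sum s.succPNat _ _

include hc hF0 hF0sum in
lemma bsHaz_le_one (τE : ℕ → ℕ+) (n : ℕ) (t : ℕ) : bsHaz c F0 i τE n t ≤ 1 := by
  unfold bsHaz
  exact Finset.prod_le_one (fun _ _ => zero_le) (fun s _ => tsub_le_self)

end Facts

end Algebra2


section Algebra3

open Finset

variable {E : Type*} [DecidableEq E]
variable {c F0 : E → ℕ+ → ENNReal} {i : E}

variable (hc : ∀ s, 0 < c i s ∧ c i s ≠ ⊤) (hF0 : ∀ s, 0 < F0 i s)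
  (hF0sum : ∑' s, F0 i s = 1)

include hc hF0 hF0sum in
lemma ratioPN_succ (τE : ℕ → ℕ+) (n : ℕ) (σ : ℕ+) :
    ratioPN c F0 i τE (n + 1) σ = ratioPN c F0 i τE n σ * bsfacP c F0 i τE n σ := by
  obtain ⟨hA0, hAt, hBt⟩ := A_facts hc hF0 hF0sum σ
  obtain ⟨hD0, hDt, hDeq⟩ := den_facts hc hF0 hF0sum σ (dcnt τE n σ) (wcnt τE n σ)
  have hC0 : ascFac (c i σ * F0 i σ + c i σ * survF0 F0 i σ)
      (dcnt τE n σ + wcnt τE n σ) ≠ 0 :=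
    ascFac_ne_zero (fun h => hA0 (add_eq_zero.1 h).1) _
  have hCt : ascFac (c i σ * F0 i σ + c i σ * survF0 F0 i σ)
      (dcnt τE n σ + wcnt τE n σ) ≠ ⊤ :=
    ascFac_ne_top (ENNReal.add_ne_top.2 ⟨hAt, hBt⟩) _
  have he0 : (c i σ * F0 i σ + c i σ * survF0 F0 i σ) +
      (((dcnt τE n σ + wcnt τE n σ : ℕ)) : ENNReal) ≠ 0 := by
    intro h
    exact hA0 (add_eq_zero.1 (add_eq_zero.1 h).1).1
  have het : (c i σ * F0 i σ + c i σ * survF0 F0 i σ) +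
      (((dcnt τE n σ + wcnt τE n σ : ℕ)) : ENNReal) ≠ ⊤ :=
    ENNReal.add_ne_top.2 ⟨ENNReal.add_ne_top.2 ⟨hAt, hBt⟩, ENNReal.natCast_ne_top _⟩
  have heD : (c i σ * F0 i σ + c i σ * survF0 F0 i σ) +
      (((dcnt τE n σ + wcnt τE n σ : ℕ)) : ENNReal) =
      c i σ * (F0 i σ + survF0 F0 i σ) + dcnt τE n σ + wcnt τE n σ := by
    rw [hDeq]
    push_cast
    ring
  rcases eq_or_ne (τE n) σ with h1 | h1
  · have hd1 : dcnt τE (n + 1) σ = dcnt τE n σ + 1 := by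
      rw [dcnt_succ, if_pos h1]
    have hw1 : wcnt τE (n + 1) σ = wcnt τE n σ := by
      rw [wcnt_succ, h1, if_neg (lt_irrefl σ), Nat.add_zero]
    unfold ratioPN bsfacP
    rw [hd1, hw1, if_pos h1,
      show dcnt τE n σ + 1 + wcnt τE n σ = (dcnt τE n σ + wcnt τE n σ) + 1 from by omega,
      ascFac_succ, ascFac_succ, ediv_helper _ _ _ _ _ hC0 hCt he0 het, heD]
  · have hd1 : dcnt τE (n + 1) σ = dcnt τE n σ := by
      rw [dcnt_succ, if_neg h1, Nat.add_zero]
    by_cases h2 : σ < τE n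
    · have hw1 : wcnt τE (n + 1) σ = wcnt τE n σ + 1 := by
        rw [wcnt_succ, if_pos h2]
      unfold ratioPN bsfacP
      rw [hd1, hw1, if_neg h1, if_pos h2,
        show dcnt τE n σ + (wcnt τE n σ + 1) = (dcnt τE n σ + wcnt τE n σ) + 1 from by
          omega,
        ascFac_succ, ascFac_succ,
        show ascFac (c i σ * F0 i σ) (dcnt τE n σ) *
            (ascFac (c i σ * survF0 F0 i σ) (wcnt τE n σ) *
              (c i σ * survF0 F0 i σ + (wcnt τE n σ : ENNReal))) =
          (ascFac (c i σ * F0 i σ) (dcnt τE n σ) *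
            (c i σ * survF0 F0 i σ + (wcnt τE n σ : ENNReal))) *
            ascFac (c i σ * survF0 F0 i σ) (wcnt τE n σ) from by ring,
        ediv_helper _ _ _ _ _ hC0 hCt he0 het, heD]
    · have hw1 : wcnt τE (n + 1) σ = wcnt τE n σ := by
        rw [wcnt_succ, if_neg h2, Nat.add_zero]
      unfold ratioPN bsfacP
      rw [hd1, hw1, if_neg h1, if_neg h2, mul_one]

include hc hF0 hF0sum in
lemma pred_eq (τE : ℕ → ℕ+) (n : ℕ) {N : ℕ} (hτN : (τE n : ℕ) ≤ N) :
    bsHaz c F0 i τE n ((τE n : ℕ) - 1) - bsHaz c F0 i τE n (τE n : ℕ) =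
      ∏ s ∈ Finset.range N, bsfacP c F0 i τE n s.succPNat := by
  have hpos : 0 < (τE n : ℕ) := (τE n).pos
  set t0 := (τE n : ℕ) - 1 with ht0
  have hsp : t0.succPNat = τE n := PNat.coe_injective (by rw [Nat.succPNat_coe]; omega)
  have hτ : (τE n : ℕ) = t0 + 1 := by omega
  obtain ⟨hD0, hDt, hDeq⟩ := den_facts hc hF0 hF0sum t0.succPNat
    (dcnt τE n t0.succPNat) (wcnt τE n t0.succPNat)
  set Hq := (c i t0.succPNat * F0 i t0.succPNat + (dcnt τE n t0.succPNat : ENNReal)) /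
    (c i t0.succPNat * (F0 i t0.succPNat + survF0 F0 i t0.succPNat) +
      dcnt τE n t0.succPNat + wcnt τE n t0.succPNat) with hHq
  have hnum_le : c i t0.succPNat * F0 i t0.succPNat + (dcnt τE n t0.succPNat : ENNReal) ≤
      c i t0.succPNat * (F0 i t0.succPNat + survF0 F0 i t0.succPNat) +
        dcnt τE n t0.succPNat + wcnt τE n t0.succPNat := by
    rw [hDeq]
    exact le_self_add
  have hHle : Hq ≤ 1 := by
    rw [hHq]
    refine le_trans (ENNReal.div_le_div_right hnum_le _) ?_
    rw [ENNReal.div_self hD0 hDt]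
  have hHsucc : bsHaz c F0 i τE n (t0 + 1) = bsHaz c F0 i τE n t0 * (1 - Hq) := by
    unfold bsHaz
    rw [Finset.prod_range_succ, hHq]
  have hane : bsHaz c F0 i τE n t0 ≠ ⊤ :=
    (lt_of_le_of_lt (bsHaz_le_one hc hF0 hF0sum τE n t0) ENNReal.one_lt_top).ne
  have hsub : bsHaz c F0 i τE n t0 - bsHaz c F0 i τE n t0 * (1 - Hq) =
      bsHaz c F0 i τE n t0 * Hq := by
    refine ENNReal.sub_eq_of_eq_add (ENNReal.mul_ne_top hane
      (lt_of_le_of_lt tsub_le_self ENNReal.one_lt_top).ne) ?_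
    rw [← mul_add, add_tsub_cancel_of_le hHle, mul_one]
  have hLHS : bsHaz c F0 i τE n ((τE n : ℕ) - 1) - bsHaz c F0 i τE n (τE n : ℕ) =
      bsHaz c F0 i τE n t0 * Hq := by
    rw [hτ, hHsucc]
    exact hsub
  have hIco : ∀ s ∈ Finset.Ico (τE n : ℕ) N, bsfacP c F0 i τE n s.succPNat = 1 := by
    intro s hs
    obtain ⟨h1, h2⟩ := Finset.mem_Ico.1 hs
    have hc1 : ¬(τE n = s.succPNat) := by
      intro hcon
      have : (τE n : ℕ) = s + 1 := by rw [hcon, Nat.succPNat_coe]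
      omega
    have hc2 : ¬(s.succPNat < τE n) := by
      intro hcon
      rw [← PNat.coe_lt_coe, Nat.succPNat_coe] at hcon
      omega
    unfold bsfacP
    rw [if_neg hc1, if_neg hc2]
  have hsplit : ∏ s ∈ Finset.range N, bsfacP c F0 i τE n s.succPNat =
      ∏ s ∈ Finset.range (τE n : ℕ), bsfacP c F0 i τE n s.succPNat := by
    rw [Finset.range_eq_Ico, ← Finset.Ico_union_Ico_eq_Ico (Nat.zero_le _) hτN,
      Finset.prod_union (Finset.Ico_disjoint_Ico_consecutive _ _ _),
      Finset.prod_eq_one hIco, mul_one, ← Finset.range_eq_Ico]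
  have hfirst : bsfacP c F0 i τE n t0.succPNat = Hq := by
    unfold bsfacP
    rw [if_pos hsp.symm, hHq]
  have hinner : ∀ s ∈ Finset.range t0, bsfacP c F0 i τE n s.succPNat =
      (c i s.succPNat * survF0 F0 i s.succPNat + (wcnt τE n s.succPNat : ENNReal)) /
        (c i s.succPNat * (F0 i s.succPNat + survF0 F0 i s.succPNat) +
          dcnt τE n s.succPNat + wcnt τE n s.succPNat) := by
    intro s hs
    have hslt : s < t0 := Finset.mem_range.1 hs
    have hc1 : ¬(τE n = s.succPNat) := by
      intro hcon
      have : (τE n : ℕ) = s + 1 := by rw [hcon, Nat.succPNat_coe]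
      omega
    have hc2 : s.succPNat < τE n := by
      rw [← PNat.coe_lt_coe, Nat.succPNat_coe]
      omega
    unfold bsfacP
    rw [if_neg hc1, if_pos hc2]
  rw [hLHS, hsplit, hτ, Finset.prod_range_succ, hfirst,
    bsHaz_eq_surv_prod hc hF0 hF0sum τE n t0, Finset.prod_congr rfl hinner]

include hc hF0 hF0sum in
lemma bs_key (τE : ℕ → ℕ+) : ∀ n N, (∀ r < n, (τE r : ℕ) ≤ N) →
    ∏ r ∈ Finset.range n,
        (bsHaz c F0 i τE r ((τE r : ℕ) - 1) - bsHaz c F0 i τE r (τE r : ℕ)) =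
      ∏ s ∈ Finset.range N, ratioPN c F0 i τE n s.succPNat := by
  intro n
  induction n with
  | zero =>
    intro N _
    rw [Finset.prod_range_zero]
    symm
    refine Finset.prod_eq_one fun s _ => ?_
    unfold ratioPN dcnt wcnt
    simp [ascFac_zero]
  | succ n ih =>
    intro N hN
    rw [Finset.prod_range_succ, ih N (fun r hr => hN r (by omega)),
      pred_eq hc hF0 hF0sum τE n (hN n (by omega)), ← Finset.prod_mul_distrib]
    exact Finset.prod_congr rfl fun s _ =>
      (ratioPN_succ hc hF0 hF0sum τE n s.succPNat).symm

include hc hF0 hF0sum in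
lemma bs_prod_eq (τE : ℕ → ℕ+) (n : ℕ) :
    ∏ r ∈ Finset.range n,
        (bsHaz c F0 i τE r ((τE r : ℕ) - 1) - bsHaz c F0 i τE r (τE r : ℕ)) =
      ∏' σ : ℕ+, ratioPN c F0 i τE n σ := by
  set N := (Finset.range n).sup (fun r => (τE r : ℕ)) with hN
  have hbound : ∀ r < n, (τE r : ℕ) ≤ N := fun r hr =>
    hN ▸ Finset.le_sup (f := fun r => (τE r : ℕ)) (Finset.mem_range.2 hr)
  rw [bs_key hc hF0 hF0sum τE n N hbound]
  have hη : ∏' σ : ℕ+, ratioPN c F0 i τE n σ =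
      ∏' s : ℕ, ratioPN c F0 i τE n s.succPNat :=
    (Equiv.tprod_eq Equiv.pnatEquivNat.symm (ratioPN c F0 i τE n)).symm
  rw [hη]
  symm
  refine tprod_eq_prod fun s hs => ?_
  have hsN : N ≤ s := by
    by_contra hcon
    exact hs (Finset.mem_range.2 (by omega))
  have hd0 : dcnt τE n s.succPNat = 0 := by
    rw [dcnt, Finset.card_eq_zero, Finset.filter_eq_empty_iff]
    intro r hr hcon
    have h1 : (τE r : ℕ) ≤ N := hbound r (Finset.mem_range.1 hr)
    have h2 : (τE r : ℕ) = s + 1 := by rw [hcon, Nat.succPNat_coe]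
    omega
  have hw0 : wcnt τE n s.succPNat = 0 := by
    rw [wcnt, Finset.card_eq_zero, Finset.filter_eq_empty_iff]
    intro r hr hcon
    have h1 : (τE r : ℕ) ≤ N := hbound r (Finset.mem_range.1 hr)
    rw [← PNat.coe_lt_coe, Nat.succPNat_coe] at hcon
    omega
  rw [ratioPN, hd0, hw0]
  simp [ascFac_zero]

end Algebra3

/-- **Lemma 1, parts 3–4.**  If the reinforced urn process is recurrent,
then for each `i ∈ E` the subsequence `(L_{i,n})_{n≥1}` has the law of the generalized
Pólya urn sequence with initial composition `m^i`, and `(T_{i,n})_{n≥1}` has the law of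
the beta-Stacy urn system with parameters `(c^i, F0^i)`; in particular both sequences are
exchangeable (their finite-dimensional laws are invariant under permutations). -/
theorem reinforcedUrn_visit_sequences_laws
    [Nonempty E] [Countable E] [DecidableEq E]
    [MeasurableSpace E] [MeasurableSingletonClass E]
    (m : E → E → ENNReal) (hmii : ∀ i, m i i = 0)
    (hmpos : ∀ i, 0 < ∑' j, m i j) (hmfin : ∀ i, ∑' j, m i j ≠ ⊤)
    (c : E → ℕ+ → ENNReal) (hc : ∀ i s, 0 < c i s ∧ c i s ≠ ⊤)
    (F0 : E → ℕ+ → ENNReal) (hF0 : ∀ i s, 0 < F0 i s) (hF0sum : ∀ i, ∑' s, F0 i s = 1)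
    (l₀ : E) (μ : Measure (ℕ → E × ℕ+)) [IsProbabilityMeasure μ]
    (h0 : μ {ω | (ω 0).1 = l₀} = 1)
    (hstep : ∀ (k : ℕ) (l : ℕ → E) (tv : ℕ → ℕ+) (j : E) (t : ℕ),
      μ {ω | (∀ h ≤ k, (ω h).1 = l h) ∧ (∀ h < k, (ω h).2 = tv h) ∧
          t < ((ω k).2 : ℕ) ∧ (ω (k + 1)).1 = j} =
        μ {ω | (∀ h ≤ k, (ω h).1 = l h) ∧ (∀ h < k, (ω h).2 = tv h)} *
        (∏ s ∈ Finset.range t,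
          (1 - (c (l k) s.succPNat * F0 (l k) s.succPNat +
                dHist l tv k (l k) s.succPNat) /
            (c (l k) s.succPNat * (F0 (l k) s.succPNat + survF0 F0 (l k) s.succPNat) +
              dHist l tv k (l k) s.succPNat + wHist l tv k (l k) s.succPNat))) *
        ((m (l k) j +
            ((Finset.range k).filter (fun h => l h = l k ∧ l (h + 1) = j)).card) /
          ((∑' e, m (l k) e) + ((Finset.range k).filter (fun h => l h = l k)).card)))
    (hrec : μ {ω | ∀ i : E, {k : ℕ | (ω k).1 = i}.Infinite} = 1) :
    (∀ (i : E) (n : ℕ) (jv : Fin n → E),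
      μ {ω | ∀ r : Fin n, visitNext i (r : ℕ) ω = jv r} =
        (∏' e : E,
            ∏ h ∈ Finset.range ((Finset.univ.filter (fun r : Fin n => jv r = e)).card),
              (m i e + h)) /
          ∏ h ∈ Finset.range n, ((∑' e, m i e) + h)) ∧
    (∀ (i : E) (n : ℕ) (τv : Fin n → ℕ+),
      μ {ω | ∀ r : Fin n, visitHold i (r : ℕ) ω = τv r} =
        ∏' s : ℕ+,
          (ascFac (c i s * F0 i s)
              ((Finset.univ.filter (fun r : Fin n => τv r = s)).card) *
            ascFac (c i s * survF0 F0 i s)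
              ((Finset.univ.filter (fun r : Fin n => s < τv r)).card) /
            ascFac (c i s * F0 i s + c i s * survF0 F0 i s)
              ((Finset.univ.filter (fun r : Fin n => τv r = s)).card +
                (Finset.univ.filter (fun r : Fin n => s < τv r)).card))) ∧
    (∀ (i : E) (n : ℕ) (jv : Fin n → E) (σ : Equiv.Perm (Fin n)),
      μ {ω | ∀ r : Fin n, visitNext i (r : ℕ) ω = jv r} =
        μ {ω | ∀ r : Fin n, visitNext i (r : ℕ) ω = jv (σ r)}) ∧
    (∀ (i : E) (n : ℕ) (τv : Fin n → ℕ+) (σ : Equiv.Perm (Fin n)),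
      μ {ω | ∀ r : Fin n, visitHold i (r : ℕ) ω = τv r} =
        μ {ω | ∀ r : Fin n, visitHold i (r : ℕ) ω = τv (σ r)}) := by
  have hrecS : μ (RecSet E) = 1 := hrec
  -- the two fundamental laws, with counts in `Fin` form
  have part1 : ∀ (i : E) (n : ℕ) (jv : Fin n → E),
      μ {ω | ∀ r : Fin n, visitNext i (r : ℕ) ω = jv r} =
        (∏' e : E,
            ∏ h ∈ Finset.range ((Finset.univ.filter (fun r : Fin n => jv r = e)).card),
              (m i e + h)) /
          ∏ h ∈ Finset.range n, ((∑' e, m i e) + h) := by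
    intro i n jv
    set jvE : ℕ → E := fun r => if h : r < n then jv ⟨r, h⟩ else i with hjvE
    have hj : ∀ r : Fin n, jvE (r : ℕ) = jv r := fun r => by
      rw [hjvE]
      simp only [r.2, dif_pos]
    have hset : {ω : ℕ → E × ℕ+ | ∀ r : Fin n, visitNext i (r : ℕ) ω = jv r} =
        {ω : ℕ → E × ℕ+ | ∀ r < n, visitNext i r ω = jvE r} := by
      ext ω
      simp only [Set.mem_setOf_eq]
      constructor
      · intro h r hr
        rw [show jvE r = jv ⟨r, hr⟩ from by rw [hjvE]; simp only [hr, dif_pos]]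
        exact h ⟨r, hr⟩
      · intro h r
        rw [← hj r]
        exact h r.1 r.2
    have hcnt : ∀ e : E, (Finset.univ.filter (fun r : Fin n => jv r = e)).card =
        ((Finset.range n).filter (fun r => jvE r = e)).card := by
      intro e
      rw [Finset.card_filter, Finset.card_filter, ← Fin.sum_univ_eq_sum_range
        (fun r => if jvE r = e then 1 else 0) n]
      exact Finset.sum_congr rfl fun r _ => by rw [hj r]
    rw [hset, lawA m c F0 μ hstep hrecS i n jvE,
      prod_div_ennreal _ _ _ (fun r _ => ⟨(lt_of_lt_of_le (hmpos i) le_self_add).ne',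
        ENNReal.add_ne_top.2 ⟨hmfin i, ENNReal.natCast_ne_top r⟩⟩),
      polya_num_eq (m i) jvE n]
    congr 1
    exact (tprod_congr fun e => by rw [hcnt e]).symm
  have part2 : ∀ (i : E) (n : ℕ) (τv : Fin n → ℕ+),
      μ {ω | ∀ r : Fin n, visitHold i (r : ℕ) ω = τv r} =
        ∏' s : ℕ+,
          (ascFac (c i s * F0 i s)
              ((Finset.univ.filter (fun r : Fin n => τv r = s)).card) *
            ascFac (c i s * survF0 F0 i s)
              ((Finset.univ.filter (fun r : Fin n => s < τv r)).card) /
            ascFac (c i s * F0 i s + c i s * survF0 F0 i s)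
              ((Finset.univ.filter (fun r : Fin n => τv r = s)).card +
                (Finset.univ.filter (fun r : Fin n => s < τv r)).card)) := by
    intro i n τv
    set τE : ℕ → ℕ+ := fun r => if h : r < n then τv ⟨r, h⟩ else 1 with hτE
    have hj : ∀ r : Fin n, τE (r : ℕ) = τv r := fun r => by
      rw [hτE]
      simp only [r.2, dif_pos]
    have hset : {ω : ℕ → E × ℕ+ | ∀ r : Fin n, visitHold i (r : ℕ) ω = τv r} =
        {ω : ℕ → E × ℕ+ | ∀ r < n, visitHold i r ω = τE r} := by
      ext ω
      simp only [Set.mem_setOf_eq]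
      constructor
      · intro h r hr
        rw [show τE r = τv ⟨r, hr⟩ from by rw [hτE]; simp only [hr, dif_pos]]
        exact h ⟨r, hr⟩
      · intro h r
        rw [← hj r]
        exact h r.1 r.2
    have hcntd : ∀ σ : ℕ+, (Finset.univ.filter (fun r : Fin n => τv r = σ)).card =
        dcnt τE n σ := by
      intro σ
      rw [dcnt, Finset.card_filter, Finset.card_filter, ← Fin.sum_univ_eq_sum_range
        (fun r => if τE r = σ then 1 else 0) n]
      exact Finset.sum_congr rfl fun r _ => by rw [hj r]
    have hcntw : ∀ σ : ℕ+, (Finset.univ.filter (fun r : Fin n => σ < τv r)).card =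
        wcnt τE n σ := by
      intro σ
      rw [wcnt, Finset.card_filter, Finset.card_filter, ← Fin.sum_univ_eq_sum_range
        (fun r => if σ < τE r then 1 else 0) n]
      exact Finset.sum_congr rfl fun r _ => by rw [hj r]
    rw [hset, lawB m c F0 μ hstep hrecS i (hmpos i) (hmfin i) n τE,
      bs_prod_eq (hc i) (hF0 i) (hF0sum i) τE n]
    exact tprod_congr fun σ => by rw [ratioPN, hcntd σ, hcntw σ]
  refine ⟨part1, part2, ?_, ?_⟩
  · intro i n jv σ
    rw [part1 i n jv, part1 i n (fun r => jv (σ r))]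
    congr 1
    refine tprod_congr fun e => ?_
    have h1 : (Finset.univ.filter (fun r : Fin n => jv (σ r) = e)).card =
        (Finset.univ.filter (fun r : Fin n => jv r = e)).card := by
      rw [Finset.card_filter, Finset.card_filter]
      exact Fintype.sum_equiv σ (fun r => if jv (σ r) = e then 1 else 0)
        (fun r => if jv r = e then 1 else 0) (fun r => rfl)
    rw [h1]
  · intro i n τv σ
    rw [part2 i n τv, part2 i n (fun r => τv (σ r))]
    refine tprod_congr fun s => ?_
    have h1 : (Finset.univ.filter (fun r : Fin n => τv (σ r) = s)).card =
        (Finset.univ.filter (fun r : Fin n => τv r = s)).card := by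
      rw [Finset.card_filter, Finset.card_filter]
      exact Fintype.sum_equiv σ (fun r => if τv (σ r) = s then 1 else 0)
        (fun r => if τv r = s then 1 else 0) (fun r => rfl)
    have h2 : (Finset.univ.filter (fun r : Fin n => s < τv (σ r))).card =
        (Finset.univ.filter (fun r : Fin n => s < τv r)).card := by
      rw [Finset.card_filter, Finset.card_filter]
      exact Fintype.sum_equiv σ (fun r => if s < τv (σ r) then 1 else 0)
        (fun r => if s < τv r then 1 else 0) (fun r => rfl)
    rw [h1, h2]
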